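/- arXiv:2002.03041 — 5 statements merged into one kernel-verified Lean document; each statement's English description precedes it below -/
import Mathlib

section
/- Let m ≥ 1 and let X ⊆ ℤ_{≥0}^m. Then the Newton polygon of the vertex set of X equals the Newton polygon of X: N(Vert(X)) = N(X). -/
open Pointwise
open Set

noncomputable section
def emb {m : ℕ} (x : Fin m → ℕ) : Fin m → ℝ := fun i => (x i : ℝ)
def newton {m : ℕ} (X : Set (Fin m → ℕ)) : Set (Fin m → ℝ) :=
  convexHull ℝ (emb '' (X + (Set.univ : Set (Fin m → ℕ))))
def vert {m : ℕ} (X : Set (Fin m → ℕ)) : Set (Fin m → ℕ) :=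
  {x ∈ X | emb x ∉ newton (X \ {x})}

variable {m : ℕ}

lemma emb_add (a b : Fin m → ℕ) : emb (a + b) = emb a + emb b := by
  funext i; simp [emb]

lemma emb_inj : Function.Injective (emb (m := m)) := by
  intro a b h; funext i
  have := congrFun h i
  simpa [emb] using this

lemma emb_nonneg (a : Fin m → ℕ) : 0 ≤ emb a := fun i => by simp [emb]

lemma emb_mono {a b : Fin m → ℕ} (h : a ≤ b) : emb a ≤ emb b := fun i => by
  simp only [emb]; exact_mod_cast h i

lemma image_add_set (S T : Set (Fin m → ℕ)) : emb '' (S + T) = emb '' S + emb '' T := by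
  ext p
  simp only [Set.mem_image, Set.mem_add]
  constructor
  · rintro ⟨q, ⟨a, ha, b, hb, rfl⟩, rfl⟩
    exact ⟨emb a, ⟨a, ha, rfl⟩, emb b, ⟨b, hb, rfl⟩, (emb_add a b).symm⟩
  · rintro ⟨_, ⟨a, ha, rfl⟩, _, ⟨b, hb, rfl⟩, rfl⟩
    exact ⟨a + b, ⟨a, ha, b, hb, rfl⟩, emb_add a b⟩

lemma univ_add_univ' : (Set.univ : Set (Fin m → ℕ)) + Set.univ = Set.univ := by
  apply Set.eq_univ_of_forall
  intro x
  exact ⟨x, trivial, 0, trivial, by simp⟩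

lemma newton_mono {S T : Set (Fin m → ℕ)} (h : S ⊆ T) : newton S ⊆ newton T :=
  convexHull_mono (Set.image_mono (Set.add_subset_add_right h))

lemma mem_gen {S : Set (Fin m → ℕ)} {y u : Fin m → ℕ} (hy : y ∈ S) :
    emb (y + u) ∈ newton S :=
  subset_convexHull ℝ _ ⟨y + u, ⟨y, hy, u, trivial, rfl⟩, rfl⟩

lemma hull_univ : convexHull ℝ (emb '' (Set.univ : Set (Fin m → ℕ))) = Set.Ici 0 := by
  apply le_antisymm
  · apply convexHull_min _ (convex_Ici 0)
    rintro p ⟨a, -, rfl⟩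
    exact emb_nonneg a
  · have h1 : emb '' (Set.univ : Set (Fin m → ℕ)) =
        Set.pi Set.univ (fun _ : Fin m => Set.range ((↑) : ℕ → ℝ)) := by
      ext f
      simp only [Set.mem_image, Set.mem_pi, Set.mem_univ, true_implies, Set.mem_range]
      constructor
      · rintro ⟨a, -, rfl⟩ i; exact ⟨a i, rfl⟩
      · intro h
        choose g hg using h
        exact ⟨g, trivial, funext hg⟩
    rw [h1]
    intro f hf
    apply mem_convexHull_pi
    intro i _
    set x : ℝ := f i with hxdef
    have h0 : (0:ℝ) ≤ x := hf i
    have hfl : ((⌊x⌋₊ : ℕ) : ℝ) ≤ x := Nat.floor_le h0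
    have hfu : x < ((⌊x⌋₊ + 1 : ℕ) : ℝ) := by exact_mod_cast Nat.lt_floor_add_one x
    have : x ∈ segment ℝ ((⌊x⌋₊ : ℕ) : ℝ) ((⌊x⌋₊ + 1 : ℕ) : ℝ) := by
      rw [segment_eq_Icc (by linarith)]
      exact ⟨hfl, le_of_lt hfu⟩
    have hm1 : ((⌊x⌋₊ : ℕ) : ℝ) ∈ Set.range ((↑) : ℕ → ℝ) := ⟨⌊x⌋₊, rfl⟩
    have hm2 : ((⌊x⌋₊ + 1 : ℕ) : ℝ) ∈ Set.range ((↑) : ℕ → ℝ) := ⟨⌊x⌋₊ + 1, rfl⟩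
    exact segment_subset_convexHull hm1 hm2 this
lemma newton_add_orthant {T : Set (Fin m → ℕ)} {p r : Fin m → ℝ}
    (hp : p ∈ newton T) (hr : 0 ≤ r) : p + r ∈ newton T := by
  have h1 : r ∈ convexHull ℝ (emb '' (Set.univ : Set (Fin m → ℕ))) := by
    rw [hull_univ]; exact hr
  have h2 : p + r ∈ convexHull ℝ (emb '' (T + Set.univ)) + convexHull ℝ (emb '' (Set.univ : Set (Fin m → ℕ))) :=
    Set.add_mem_add hp h1
  rw [← convexHull_add] at h2
  rw [← image_add_set, add_assoc, univ_add_univ'] at h2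
  exact h2

lemma mem_newton_singleton {q : Fin m → ℕ} {p : Fin m → ℝ} :
    p ∈ newton {q} ↔ ∃ r : Fin m → ℝ, 0 ≤ r ∧ p = emb q + r := by
  have h1 : newton {q} = {emb q} + Set.Ici (0 : Fin m → ℝ) := by
    unfold newton
    rw [image_add_set, convexHull_add, hull_univ]
    congr 1
    simp
  rw [h1]
  simp only [Set.singleton_add, Set.mem_image, Set.mem_Ici]
  constructor
  · rintro ⟨r, hr, rfl⟩; exact ⟨r, hr, rfl⟩
  · rintro ⟨r, hr, rfl⟩; exact ⟨r, hr, rfl⟩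

lemma dec {p : Fin m → ℝ} {A B : Set (Fin m → ℝ)} (hB : B.Nonempty)
    (hp : p ∈ convexHull ℝ (A ∪ B)) :
    ∃ t : ℝ, 0 ≤ t ∧ t ≤ 1 ∧ ∃ b ∈ convexHull ℝ B, ∃ c : Fin m → ℝ,
      (t ≠ 1 → c ∈ convexHull ℝ A) ∧ p = t • b + (1 - t) • c := by
  rcases A.eq_empty_or_nonempty with hA | hA
  · rw [hA, Set.empty_union] at hp
    exact ⟨1, by norm_num, le_refl 1, p, hp, p, by simp, by simp⟩
  · rw [convexHull_union hA hB, mem_convexJoin] at hp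
    obtain ⟨a, ha, b, hb, u, v, hu, hv, huv, hs⟩ := hp
    refine ⟨v, hv, by linarith, b, hb, a, fun _ => ha, ?_⟩
    rw [← hs]
    have : 1 - v = u := by linarith
    rw [this, add_comm]

lemma decN {x q : Fin m → ℕ} {T : Set (Fin m → ℕ)} (h : emb x ∈ newton (T ∪ {q})) :
    ∃ t : ℝ, 0 ≤ t ∧ t ≤ 1 ∧ ∃ r : Fin m → ℝ, 0 ≤ r ∧ ∃ c : Fin m → ℝ,
      (t ≠ 1 → c ∈ newton T) ∧ emb x = t • (emb q + r) + (1 - t) • c := by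
  have hsplit : emb '' ((T ∪ {q}) + Set.univ) =
      emb '' (T + Set.univ) ∪ emb '' ({q} + Set.univ) := by
    rw [Set.union_add, Set.image_union]
  unfold newton at h
  rw [hsplit] at h
  have hBne : (emb '' ({q} + (Set.univ : Set (Fin m → ℕ)))).Nonempty :=
    ⟨emb (q + 0), ⟨q + 0, ⟨q, rfl, 0, trivial, rfl⟩, rfl⟩⟩
  obtain ⟨t, ht0, ht1, b, hb, c, hc, heq⟩ := dec hBne h
  have hb' : b ∈ newton {q} := hb
  rw [mem_newton_singleton] at hb'
  obtain ⟨r, hr, rfl⟩ := hb'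
  exact ⟨t, ht0, ht1, r, hr, c, hc, heq⟩

lemma exchange {T : Set (Fin m → ℕ)} {x y : Fin m → ℕ} (hxy : x ≠ y)
    (hx : emb x ∈ newton (T ∪ {y})) (hy : emb y ∈ newton (T ∪ {x})) :
    emb y ∈ newton T := by
  obtain ⟨t, ht0, ht1, r, hr, c, hc, h1⟩ := decN hx
  obtain ⟨s, hs0, hs1, w, hw, d, hd, h2⟩ := decN hy
  by_cases hst : s * t = 1
  · have hss : s = 1 := by nlinarith
    have htt : t = 1 := by nlinarith
    rw [htt] at h1; rw [hss] at h2
    simp only [one_smul, sub_self, zero_smul, add_zero] at h1 h2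
    have hrw : r + w = 0 := by
      have : emb y = emb y + (r + w) := by
        calc emb y = emb x + w := h2
        _ = (emb y + r) + w := by rw [h1]
        _ = emb y + (r + w) := by rw [add_assoc]
      have h3 := congrArg (fun f => f - emb y) this
      simpa using h3.symm
    have hr0 : r = 0 := by
      funext i
      have h4 := congrFun hrw i
      have h5 : (0:ℝ) ≤ r i := by simpa using hr i
      have h6 : (0:ℝ) ≤ w i := by simpa using hw i
      simp only [Pi.add_apply, Pi.zero_apply] at h4 ⊢
      linarith
    rw [hr0, add_zero] at h1
    exact absurd (emb_inj h1) hxy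
  · have hst1 : s * t < 1 := lt_of_le_of_ne (by nlinarith) hst
    have hk : (0:ℝ) < 1 - s * t := by linarith
    set e : Fin m → ℝ := (s * (1 - t) / (1 - s * t)) • c + ((1 - s) / (1 - s * t)) • d with he_def
    set ρ : Fin m → ℝ := (s * t / (1 - s * t)) • r + (s / (1 - s * t)) • w with hρ_def
    have hρ : 0 ≤ ρ := by
      intro i
      simp only [hρ_def, Pi.add_apply, Pi.smul_apply, smul_eq_mul, Pi.zero_apply]
      have h3 : (0:ℝ) ≤ r i := by simpa using hr i
      have h4 : (0:ℝ) ≤ w i := by simpa using hw i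
      have h5 : 0 ≤ s * t / (1 - s * t) := by positivity
      have h6 : 0 ≤ s / (1 - s * t) := by positivity
      nlinarith
    have he : e ∈ newton T := by
      by_cases htt : t = 1
      · have hss : s ≠ 1 := fun h => hst (by rw [h, htt]; ring)
        have hsne : (1:ℝ) - s ≠ 0 := sub_ne_zero.mpr (fun h => hss h.symm)
        have hα : s * (1 - t) / (1 - s * t) = 0 := by rw [htt]; simp
        have hβ : (1 - s) / (1 - s * t) = 1 := by rw [htt, mul_one]; exact div_self hsne
        have : e = d := by rw [he_def, hα, hβ]; simp
        rw [this]; exact hd hss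
      · by_cases hss : s = 1
        · have htne : (1:ℝ) - t ≠ 0 := sub_ne_zero.mpr (fun h => htt h.symm)
          have hα : s * (1 - t) / (1 - s * t) = 1 := by
            rw [hss, one_mul, one_mul]; exact div_self htne
          have hβ : (1 - s) / (1 - s * t) = 0 := by rw [hss]; simp
          have : e = c := by rw [he_def, hα, hβ]; simp
          rw [this]; exact hc htt
        · have hc' := hc htt
          have hd' := hd hss
          have ha : 0 ≤ s * (1 - t) / (1 - s * t) := by
            apply div_nonneg _ (le_of_lt hk); nlinarith
          have hbn : 0 ≤ (1 - s) / (1 - s * t) := by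
            apply div_nonneg _ (le_of_lt hk); linarith
          have hab : s * (1 - t) / (1 - s * t) + (1 - s) / (1 - s * t) = 1 := by
            field_simp; ring
          exact (convex_convexHull ℝ _) hc' hd' ha hbn hab
    have key : emb y = e + ρ := by
      funext i
      have e1 := congrFun h1 i
      have e2 := congrFun h2 i
      simp only [Pi.add_apply, Pi.smul_apply, smul_eq_mul] at e1 e2
      simp only [he_def, hρ_def, Pi.add_apply, Pi.smul_apply, smul_eq_mul]
      have hkne : (1:ℝ) - s * t ≠ 0 := ne_of_gt hk
      have hkey : (1 - s * t) * (emb y i) =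
          s * t * (r i) + s * (w i) + s * (1 - t) * (c i) + (1 - s) * (d i) := by
        linear_combination s * e1 + e2
      field_simp
      linear_combination hkey
    rw [key]
    exact newton_add_orthant he hρ

lemma key2 (hm' : 1 ≤ m) {x : Fin m → ℕ} {T : Set (Fin m → ℕ)}
    (h : emb x ∈ convexHull ℝ
      (emb '' (T + Set.univ) ∪ emb '' {z : Fin m → ℕ | x ≤ z ∧ z ≠ x})) :
    emb x ∈ newton T := by
  set H : Set (Fin m → ℝ) :=
    Set.Ici (emb x) ∩ {p : Fin m → ℝ | (∑ i, (x i : ℝ)) + 1 ≤ ∑ i, p i} with hHdef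
  have hHconv : Convex ℝ H := by
    apply (convex_Ici (emb x)).inter
    apply convex_halfSpace_ge
    exact ⟨fun a b => Finset.sum_add_distrib, fun c a => by simp [Finset.mul_sum]⟩
  have hBH : emb '' {z : Fin m → ℕ | x ≤ z ∧ z ≠ x} ⊆ H := by
    rintro p ⟨z, ⟨hxz, hzx⟩, rfl⟩
    constructor
    · exact emb_mono hxz
    · have hlt : (∑ i, x i) < ∑ i, z i := by
        apply Finset.sum_lt_sum (fun i _ => hxz i)
        by_contra hcon; push_neg at hcon
        apply hzx; funext i
        have h1 : x i ≤ z i := hxz i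
        have h2 : z i ≤ x i := hcon i (Finset.mem_univ i)
        omega
      have hle : (∑ i, x i) + 1 ≤ ∑ i, z i := hlt
      show (∑ i, (x i : ℝ)) + 1 ≤ ∑ i, emb z i
      have : ∑ i, emb z i = ((∑ i, z i : ℕ) : ℝ) := by simp [emb]
      rw [this]
      have h2 : (∑ i, (x i : ℝ)) = ((∑ i, x i : ℕ) : ℝ) := by push_cast; ring
      rw [h2]
      exact_mod_cast hle
  have hBne : (emb '' {z : Fin m → ℕ | x ≤ z ∧ z ≠ x}).Nonempty := by
    refine ⟨emb (x + fun _ => 1), ⟨x + fun _ => 1, ⟨?_, ?_⟩, rfl⟩⟩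
    · intro i; simp
    · intro hcon
      have := congrFun hcon ⟨0, hm'⟩
      simp at this
  obtain ⟨t, ht0, ht1, b, hb, c, hc, heq⟩ := dec hBne h
  have hbH : b ∈ H := convexHull_min hBH hHconv hb
  by_cases htt : t = 1
  · exfalso
    rw [htt] at heq
    simp only [one_smul, sub_self, zero_smul, add_zero] at heq
    have h2 : (∑ i, (x i : ℝ)) + 1 ≤ ∑ i, b i := hbH.2
    rw [← heq] at h2
    have h3 : ∑ i, emb x i = ∑ i, (x i : ℝ) := by simp [emb]
    linarith
  · have ht1' : t < 1 := lt_of_le_of_ne ht1 htt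
    have hc' := hc htt
    set ρ : Fin m → ℝ := (t / (1 - t)) • (b - emb x) with hρdef
    have hρ : 0 ≤ ρ := by
      intro i
      simp only [hρdef, Pi.smul_apply, Pi.sub_apply, smul_eq_mul, Pi.zero_apply]
      have h5 : 0 < 1 - t := by linarith
      have h6 : emb x i ≤ b i := hbH.1 i
      have h7 : 0 ≤ t / (1 - t) := by positivity
      nlinarith
    have key : emb x = c + ρ := by
      funext i
      have e1 := congrFun heq i
      simp only [Pi.add_apply, Pi.smul_apply, smul_eq_mul] at e1
      simp only [Pi.add_apply, hρdef, Pi.smul_apply, Pi.sub_apply, smul_eq_mul]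
      have htne : (1:ℝ) - t ≠ 0 := by intro hcon; apply htt; linarith
      have hkey : (1 - t) * emb x i = (1 - t) * c i + t * (b i - emb x i) := by
        linear_combination e1
      field_simp
      linear_combination hkey
    rw [key]
    exact newton_add_orthant hc' hρ

lemma vert_subset (M : Set (Fin m → ℕ)) : vert M ⊆ M := fun _ hx => hx.1

lemma finCase : ∀ n : ℕ, ∀ M : Set (Fin m → ℕ), M.Finite → M.ncard ≤ n →
    newton (vert M) = newton M := by
  intro n
  induction n with
  | zero =>
    intro M hf hn
    have hM : M = ∅ := by
      rw [← Set.ncard_eq_zero hf]; omega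
    subst hM
    have hv : vert (∅ : Set (Fin m → ℕ)) = ∅ :=
      Set.eq_empty_of_subset_empty (vert_subset _)
    rw [hv]
  | succ n ih =>
    intro M hf hn
    apply Set.Subset.antisymm (newton_mono (vert_subset M))
    by_cases hv : ∀ x ∈ M, x ∈ vert M
    · have : vert M = M := Set.Subset.antisymm (vert_subset M) hv
      rw [this]
    · push_neg at hv
      obtain ⟨x, hxM, hxv⟩ := hv
      have hxN : emb x ∈ newton (M \ {x}) := by
        by_contra hcon
        exact hxv ⟨hxM, hcon⟩
      have hMx : newton M ⊆ newton (M \ {x}) := by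
        apply convexHull_min _ (convex_convexHull ℝ _)
        rintro p ⟨q, ⟨y, hy, u, -, rfl⟩, rfl⟩
        by_cases hyx : y = x
        · subst hyx
          rw [emb_add]
          exact newton_add_orthant hxN (emb_nonneg u)
        · exact mem_gen ⟨hy, hyx⟩
      have hcard : (M \ {x}).ncard ≤ n := by
        have := Set.ncard_diff_singleton_lt_of_mem hxM hf
        omega
      have ihx := ih (M \ {x}) (hf.subset Set.diff_subset) hcard
      have hsub : vert (M \ {x}) ⊆ vert M := by
        rintro y ⟨⟨hyM, hyx'⟩, hyN⟩
        have hyx : y ≠ x := hyx'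
        refine ⟨hyM, ?_⟩
        intro hyNM
        have hxy : x ≠ y := fun h => hyx h.symm
        have e1 : M \ {x} = (M \ {x, y}) ∪ {y} := by
          ext z
          simp only [Set.mem_diff, Set.mem_union, Set.mem_singleton_iff,
            Set.mem_insert_iff, not_or]
          constructor
          · rintro ⟨hz, hzx⟩
            by_cases hzy : z = y
            · exact Or.inr hzy
            · exact Or.inl ⟨hz, hzx, hzy⟩
          · rintro (⟨hz, hzx, -⟩ | rfl)
            · exact ⟨hz, hzx⟩
            · exact ⟨hyM, hyx⟩
        have e2 : M \ {y} = (M \ {x, y}) ∪ {x} := by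
          ext z
          simp only [Set.mem_diff, Set.mem_union, Set.mem_singleton_iff,
            Set.mem_insert_iff, not_or]
          constructor
          · rintro ⟨hz, hzy⟩
            by_cases hzx : z = x
            · exact Or.inr hzx
            · exact Or.inl ⟨hz, hzx, hzy⟩
          · rintro (⟨hz, -, hzy⟩ | rfl)
            · exact ⟨hz, hzy⟩
            · exact ⟨hxM, hxy⟩
        rw [e1] at hxN
        rw [e2] at hyNM
        have hres := exchange hxy hxN hyNM
        apply hyN
        have e3 : (M \ {x}) \ {y} = M \ {x, y} := by
          rw [Set.diff_diff, Set.singleton_union]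
        rw [e3]
        exact hres
      calc newton M ⊆ newton (M \ {x}) := hMx
        _ = newton (vert (M \ {x})) := ihx.symm
        _ ⊆ newton (vert M) := newton_mono hsub

theorem newton_vert_eq_newton (m : ℕ) (hm : 1 ≤ m) (X : Set (Fin m → ℕ)) :
    newton (vert X) = newton X := by
  classical
  set M : Set (Fin m → ℕ) := {z ∈ X | ∀ w ∈ X, w ≤ z → w = z} with hMdef
  have hMX : M ⊆ X := fun z hz => hz.1
  have D1 : ∀ y ∈ X, ∃ z ∈ M, z ≤ y := by
    have key : ∀ n : ℕ, ∀ y ∈ X, (∑ i, y i) ≤ n → ∃ z ∈ M, z ≤ y := by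
      intro n
      induction n with
      | zero =>
        intro y hy hsum
        refine ⟨y, ⟨hy, ?_⟩, le_refl y⟩
        intro w hw hwy
        funext i
        have h1 : w i ≤ y i := hwy i
        have h2 : y i = 0 := by
          have h3 : ∑ i, y i = 0 := Nat.le_zero.mp hsum
          exact (Finset.sum_eq_zero_iff).mp h3 i (Finset.mem_univ i)
        omega
      | succ n ih =>
        intro y hy hsum
        by_cases hmin : ∀ w ∈ X, w ≤ y → w = y
        · exact ⟨y, ⟨hy, hmin⟩, le_refl y⟩
        · push_neg at hmin
          obtain ⟨w, hw, hwy, hne⟩ := hmin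
          have hlt : (∑ i, w i) < ∑ i, y i := by
            apply Finset.sum_lt_sum (fun i _ => hwy i)
            by_contra hcon; push_neg at hcon
            exact hne (funext fun i => by
              have h1 : w i ≤ y i := hwy i
              have h2 : y i ≤ w i := hcon i (Finset.mem_univ i)
              omega)
          obtain ⟨z, hz, hzw⟩ := ih w hw (by omega)
          exact ⟨z, hz, le_trans hzw hwy⟩
    intro y hy
    exact key (∑ i, y i) y hy (le_refl _)
  have hanti : IsAntichain (· ≤ ·) M := by
    intro a ha b hb hne hab
    exact hne (hb.2 a ha.1 hab)
  haveI : IsWellOrder ℕ (· < ·) := ⟨⟩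
  have hMfin : M.Finite :=
    hanti.finite_of_partiallyWellOrderedOn (Set.isPWO_of_wellQuasiOrderedLE M)
  have hNXM : newton X = newton M := by
    apply Set.Subset.antisymm
    · apply convexHull_min _ (convex_convexHull ℝ _)
      rintro p ⟨q, ⟨y, hy, u, -, rfl⟩, rfl⟩
      obtain ⟨z, hz, hzy⟩ := D1 y hy
      have hdec : y + u = z + ((y - z) + u) := by
        funext i
        have h1 : z i ≤ y i := hzy i
        show y i + u i = z i + ((y i - z i) + u i)
        omega
      show emb (y + u) ∈ newton M
      rw [hdec]
      exact mem_gen hz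
    · exact newton_mono hMX
  have hVXM : vert X = vert M := by
    apply Set.Subset.antisymm
    · rintro x ⟨hxX, hxN⟩
      have hxmin : ∀ w ∈ X, w ≤ x → w = x := by
        intro w hw hwx
        by_contra hne
        apply hxN
        have hwmem : w ∈ X \ {x} := ⟨hw, fun h => hne (Set.mem_singleton_iff.mp h)⟩
        have hdec : x = w + (x - w) := by
          funext i
          have h1 : w i ≤ x i := hwx i
          show x i = w i + (x i - w i)
          omega
        rw [show emb x = emb (w + (x - w)) from congrArg emb hdec]
        exact mem_gen hwmem
      exact ⟨⟨hxX, hxmin⟩,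
        fun h => hxN (newton_mono (Set.diff_subset_diff_left hMX) h)⟩
    · rintro x ⟨hxM, hxNM⟩
      refine ⟨hxM.1, ?_⟩
      intro hc
      apply hxNM
      apply key2 hm
      refine convexHull_mono ?_ hc
      rintro p ⟨q, ⟨y, hy, u, -, rfl⟩, rfl⟩
      obtain ⟨z, hz, hzy⟩ := D1 y hy.1
      by_cases hzx : z = x
      · right
        have hxy : x ≤ y := hzx ▸ hzy
        refine ⟨y + u, ⟨?_, ?_⟩, rfl⟩
        · intro i
          have h1 : x i ≤ y i := hxy i
          show x i ≤ y i + u i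
          omega
        · intro hcon
          apply hy.2
          apply Set.mem_singleton_iff.mpr
          funext i
          have h1 : y i + u i = x i := congrFun hcon i
          have h2 : x i ≤ y i := hxy i
          omega
      · left
        have hdec : y + u = z + ((y - z) + u) := by
          funext i
          have h1 : z i ≤ y i := hzy i
          show y i + u i = z i + ((y i - z i) + u i)
          omega
        exact ⟨z + ((y - z) + u), ⟨z, ⟨hz, hzx⟩, (y - z) + u, trivial, rfl⟩,
          congrArg emb hdec.symm⟩
  rw [hVXM, hNXM]
  exact finCase M.ncard M hMfin (le_refl _)

end
end

section
/- Let m ≥ 1 and let X, Y ⊆ ℤ_{≥0}^m. Then Vert(X) = Vert(Y) if and only if N(X) = N(Y). -/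
open Pointwise

noncomputable section

namespace NP

variable {m : ℕ}

/-- The nonnegative orthant. -/
def CC (m : ℕ) : Set (Fin m → ℝ) := {v | ∀ i, 0 ≤ v i}

/-- `conv A + cone`. -/
def SR (A : Set (Fin m → ℝ)) : Set (Fin m → ℝ) := convexHull ℝ A + CC m

lemma emb_inj : Function.Injective (emb (m := m)) := by
  intro a b h
  funext i
  exact Nat.cast_injective (congrFun h i)

lemma emb_add (x y : Fin m → ℕ) : emb (x + y) = emb x + emb y := by
  funext i; simp [emb]

lemma emb_mem_CC (x : Fin m → ℕ) : emb x ∈ CC m := fun i => by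
  simp [emb]

lemma convex_CC : Convex ℝ (CC m) := by
  intro a ha b hb s t hs ht _ i
  exact add_nonneg (mul_nonneg hs (ha i)) (mul_nonneg ht (hb i))

lemma zero_mem_CC : (0 : Fin m → ℝ) ∈ CC m := fun i => le_refl _

lemma CC_add {u v : Fin m → ℝ} (hu : u ∈ CC m) (hv : v ∈ CC m) : u + v ∈ CC m :=
  fun i => add_nonneg (hu i) (hv i)

lemma CC_smul {c : ℝ} {v : Fin m → ℝ} (hc : 0 ≤ c) (hv : v ∈ CC m) : c • v ∈ CC m :=
  fun i => mul_nonneg hc (hv i)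

lemma hull_univ : convexHull ℝ (emb '' (Set.univ : Set (Fin m → ℕ))) = CC m := by
  apply le_antisymm
  · exact convexHull_min (by rintro _ ⟨x, -, rfl⟩; exact emb_mem_CC x) convex_CC
  · intro v hv
    obtain ⟨N, hN⟩ := exists_nat_ge (∑ i, v i)
    have hN1 : (0:ℝ) < (N:ℝ) + 1 := by positivity
    set M : ℝ := (N:ℝ) + 1 with hM
    have hsum_le : ∑ i, v i ≤ M := le_trans hN (by simp [hM])
    -- convex combination over Option (Fin m)
    have hconv := convex_convexHull ℝ (emb '' (Set.univ : Set (Fin m → ℕ)))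
    let w : Option (Fin m) → ℝ := fun o => Option.rec (1 - (∑ i, v i) / M) (fun i => v i / M) o
    let p : Option (Fin m) → (Fin m → ℝ) := fun o =>
      Option.rec (emb 0) (fun i => emb (fun j => if i = j then N + 1 else 0)) o
    have hw : ∀ o ∈ (Finset.univ : Finset (Option (Fin m))), 0 ≤ w o := by
      rintro (_ | i) -
      · simp only [w]
        rw [sub_nonneg, div_le_one hN1]
        exact hsum_le
      · exact div_nonneg (hv i) hN1.le
    have hw1 : ∑ o : Option (Fin m), w o = 1 := by
      rw [Fintype.sum_option]
      simp only [w]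
      rw [← Finset.sum_div]
      ring
    have hp : ∀ o ∈ (Finset.univ : Finset (Option (Fin m))), p o ∈
        convexHull ℝ (emb '' (Set.univ : Set (Fin m → ℕ))) := by
      rintro (_ | i) - <;>
        exact subset_convexHull ℝ _ ⟨_, Set.mem_univ _, rfl⟩
    have := hconv.sum_mem hw hw1 hp
    convert this using 1
    funext j
    rw [Finset.sum_apply]
    rw [Fintype.sum_option]
    simp only [w, p, emb, Pi.smul_apply, smul_eq_mul]
    push_cast
    have : ∀ i : Fin m, v i / M * (if i = j then ((N:ℝ)+1) else 0) = if i = j then v i else 0 := by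
      intro i
      by_cases h : i = j <;> simp [h, ← hM, div_mul_cancel₀, hN1.ne']
    rw [Finset.sum_congr rfl (fun i _ => this i)]
    rw [Finset.sum_ite_eq' Finset.univ j v]
    simp

lemma image_emb_add (A B : Set (Fin m → ℕ)) : emb '' (A + B) = emb '' A + emb '' B := by
  ext z
  constructor
  · rintro ⟨_, ⟨a, ha, b, hb, rfl⟩, rfl⟩
    exact ⟨emb a, ⟨a, ha, rfl⟩, emb b, ⟨b, hb, rfl⟩, (emb_add a b).symm⟩
  · rintro ⟨_, ⟨a, ha, rfl⟩, _, ⟨b, hb, rfl⟩, rfl⟩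
    exact ⟨a + b, ⟨a, ha, b, hb, rfl⟩, emb_add a b⟩

lemma newton_eq (X : Set (Fin m → ℕ)) : newton X = SR (emb '' X) := by
  rw [newton, SR, image_emb_add, convexHull_add, hull_univ]

end NP

section part2
namespace NP
variable {m : ℕ}

lemma subset_SR (A : Set (Fin m → ℝ)) : A ⊆ SR A := by
  intro a ha
  exact ⟨a, subset_convexHull ℝ A ha, 0, zero_mem_CC, add_zero a⟩

lemma SR_mono {A B : Set (Fin m → ℝ)} (h : A ⊆ B) : SR A ⊆ SR B :=
  Set.add_subset_add_right (convexHull_mono h)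

lemma convex_SR (A : Set (Fin m → ℝ)) : Convex ℝ (SR A) :=
  (convex_convexHull ℝ A).add convex_CC

lemma SR_absorb {A : Set (Fin m → ℝ)} {z v : Fin m → ℝ} (hz : z ∈ SR A) (hv : v ∈ CC m) :
    z + v ∈ SR A := by
  obtain ⟨p, hp, u, hu, rfl⟩ := hz
  exact ⟨p, hp, u + v, CC_add hu hv, (add_assoc p u v).symm⟩

lemma SR_closure {A B : Set (Fin m → ℝ)} (h : A ⊆ SR B) : SR A ⊆ SR B := by
  rintro z ⟨p, hp, u, hu, rfl⟩
  have hp' : p ∈ SR B := by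
    have : convexHull ℝ A ⊆ SR B := convexHull_min h (convex_SR B)
    exact this hp
  exact SR_absorb hp' hu

/-- Splitting lemma: any element of `SR A` is either `x + v` or a nontrivial
combination of `x` with an element of `SR (A \ {x})`. -/
lemma SR_split {A : Set (Fin m → ℝ)} (x : Fin m → ℝ) {z : Fin m → ℝ} (hz : z ∈ SR A) :
    (∃ v ∈ CC m, z = x + v) ∨
    ∃ θ : ℝ, 0 ≤ θ ∧ θ < 1 ∧ ∃ q ∈ SR (A \ {x}), z = θ • x + (1 - θ) • q := by
  obtain ⟨p, hp, v, hv, rfl⟩ := hz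
  rw [convexHull_eq] at hp
  obtain ⟨ι, t, w, y, hw0, hw1, hy, hcm⟩ := hp
  rw [Finset.centerMass_eq_of_sum_1 _ _ hw1] at hcm
  classical
  set t₁ := t.filter (fun i => y i = x) with ht₁
  set t₂ := t.filter (fun i => ¬ (y i = x)) with ht₂
  set θ := ∑ i ∈ t₁, w i with hθ
  have hsum_split : ∑ i ∈ t₁, w i + ∑ i ∈ t₂, w i = 1 := by
    rw [ht₁, ht₂, Finset.sum_filter_add_sum_filter_not t _ w, hw1]
  have hθ0 : 0 ≤ θ := Finset.sum_nonneg (fun i hi => hw0 i (Finset.mem_of_mem_filter i hi))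
  have hvec_split : ∑ i ∈ t, w i • y i = θ • x + ∑ i ∈ t₂, w i • y i := by
    rw [← Finset.sum_filter_add_sum_filter_not t (fun i => y i = x) (fun i => w i • y i)]
    congr 1
    rw [Finset.sum_congr rfl (fun i hi => by rw [(Finset.mem_filter.1 hi).2]), ← Finset.sum_smul]
  by_cases hθ1 : θ = 1
  · -- all mass on x
    left
    refine ⟨v, hv, ?_⟩
    have h2 : ∑ i ∈ t₂, w i = 0 := by linarith [hsum_split, hθ1]
    have hz2 : ∀ i ∈ t₂, w i = 0 := by
      intro i hi
      exact le_antisymm (h2 ▸ Finset.single_le_sum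
        (fun j hj => hw0 j (Finset.mem_of_mem_filter j hj)) hi) (hw0 i (Finset.mem_of_mem_filter i hi))
    have : ∑ i ∈ t₂, w i • y i = 0 :=
      Finset.sum_eq_zero (fun i hi => by rw [hz2 i hi, zero_smul])
    rw [← hcm, hvec_split, this, add_zero, hθ1, one_smul]
  · right
    have hθlt : θ < 1 := lt_of_le_of_ne (by
      have : θ ≤ θ + ∑ i ∈ t₂, w i := le_add_of_nonneg_right
        (Finset.sum_nonneg (fun i hi => hw0 i (Finset.mem_of_mem_filter i hi)))
      linarith [hsum_split]) hθ1
    have hs2 : ∑ i ∈ t₂, w i = 1 - θ := by linarith [hsum_split]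
    have hs2pos : 0 < ∑ i ∈ t₂, w i := by rw [hs2]; linarith
    have hq0 : t₂.centerMass w y ∈ convexHull ℝ (A \ {x}) := by
      apply Finset.centerMass_mem_convexHull
      · exact fun i hi => hw0 i (Finset.mem_of_mem_filter i hi)
      · exact hs2pos
      · intro i hi
        exact ⟨hy i (Finset.mem_of_mem_filter i hi), (Finset.mem_filter.1 hi).2⟩
    set q₀ := t₂.centerMass w y with hq₀def
    have hsum2 : ∑ i ∈ t₂, w i • y i = (1 - θ) • q₀ := by
      rw [hq₀def, Finset.centerMass, hs2, smul_inv_smul₀ (by linarith : (1:ℝ) - θ ≠ 0)]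
    have hq0' : q₀ ∈ SR (A \ {x}) :=
      ⟨q₀, hq0, 0, zero_mem_CC, add_zero q₀⟩
    refine ⟨θ, hθ0, hθlt, q₀ + (1 - θ)⁻¹ • v, SR_absorb hq0'
      (CC_smul (by simp only [inv_nonneg]; linarith) hv), ?_⟩
    rw [← hcm, hvec_split, hsum2, smul_add, smul_inv_smul₀ (by linarith : (1:ℝ) - θ ≠ 0)]
    abel

end NP
end part2

section part3
namespace NP
variable {m : ℕ}

lemma CC_eq_zero_of_combo {s t : ℝ} {va vb : Fin m → ℝ} (hs : 0 < s) (ht : 0 < t)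
    (hva : va ∈ CC m) (hvb : vb ∈ CC m) (h : s • va + t • vb = 0) : va = 0 ∧ vb = 0 := by
  constructor <;> funext i <;>
  · have hi := congrFun h i
    simp only [Pi.add_apply, Pi.smul_apply, smul_eq_mul, Pi.zero_apply] at hi
    have h1 : 0 ≤ s * va i := mul_nonneg hs.le (hva i)
    have h2 : 0 ≤ t * vb i := mul_nonneg ht.le (hvb i)
    have hva0 : s * va i = 0 := by linarith
    have hvb0 : t * vb i = 0 := by linarith
    simp only [Pi.zero_apply]
    first
    | exact (mul_eq_zero.1 hva0).resolve_left hs.ne'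
    | exact (mul_eq_zero.1 hvb0).resolve_left ht.ne'

lemma extreme_of_not_mem {A : Set (Fin m → ℝ)} {x : Fin m → ℝ} (hx : x ∈ SR A)
    (hnx : x ∉ SR (A \ {x})) : x ∈ (SR A).extremePoints ℝ := by
  refine ⟨hx, fun a ha b hb hseg => ?_⟩
  obtain ⟨s, t, hs, ht, hst, habx⟩ := hseg
  rcases SR_split x ha with ⟨va, hva, rfl⟩ | ⟨θa, hθa0, hθa1, qa, hqa, rfl⟩
  · rcases SR_split x hb with ⟨vb, hvb, rfl⟩ | ⟨θb, hθb0, hθb1, qb, hqb, rfl⟩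
    · -- both of the form x + v
      have hcomb : s • va + t • vb = 0 := by
        have h0 : s • va + t • vb = (s • (x + va) + t • (x + vb)) - (s + t) • x := by module
        rw [h0, habx, hst, one_smul, sub_self]
      obtain ⟨h1, h2⟩ := CC_eq_zero_of_combo hs ht hva hvb hcomb
      rw [h1, add_zero]
    · -- a = x + va, b = θb x + (1-θb) qb
      exfalso
      apply hnx
      have hc : 0 < t * (1 - θb) := mul_pos ht (by linarith)
      have h2 : (s + t * θb) • x + (s • va + (t * (1 - θb)) • qb) = x := by
        have e : (s + t * θb) • x + (s • va + (t * (1 - θb)) • qb)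
            = s • (x + va) + t • (θb • x + (1 - θb) • qb) := by module
        rw [e, habx]
      have h3 : s + t * θb = 1 - t * (1 - θb) := by linear_combination hst
      rw [h3] at h2
      have h5 : s • va + (t * (1 - θb)) • qb = x - (1 - t * (1 - θb)) • x :=
        eq_sub_of_add_eq' h2
      have key : (t * (1 - θb)) • x = s • va + (t * (1 - θb)) • qb := by
        rw [h5]; module
      have hxq : x = qb + (s / (t * (1 - θb))) • va := by
        have h6 := congrArg (fun z => (t * (1 - θb))⁻¹ • z) key
        simp only [inv_smul_smul₀ hc.ne'] at h6
        rw [h6, smul_add, inv_smul_smul₀ hc.ne', div_eq_inv_mul, mul_smul]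
        module
      have hmem : qb + (s / (t * (1 - θb))) • va ∈ SR (A \ {x}) :=
        SR_absorb hqb (CC_smul (div_nonneg hs.le hc.le) hva)
      rwa [← hxq] at hmem
  · rcases SR_split x hb with ⟨vb, hvb, rfl⟩ | ⟨θb, hθb0, hθb1, qb, hqb, rfl⟩
    · -- symmetric to previous case
      exfalso
      apply hnx
      have hc : 0 < s * (1 - θa) := mul_pos hs (by linarith)
      have h2 : (t + s * θa) • x + (t • vb + (s * (1 - θa)) • qa) = x := by
        have e : (t + s * θa) • x + (t • vb + (s * (1 - θa)) • qa)
            = s • (θa • x + (1 - θa) • qa) + t • (x + vb) := by module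
        rw [e, habx]
      have h3 : t + s * θa = 1 - s * (1 - θa) := by linear_combination hst
      rw [h3] at h2
      have h5 : t • vb + (s * (1 - θa)) • qa = x - (1 - s * (1 - θa)) • x :=
        eq_sub_of_add_eq' h2
      have key : (s * (1 - θa)) • x = t • vb + (s * (1 - θa)) • qa := by
        rw [h5]; module
      have hxq : x = qa + (t / (s * (1 - θa))) • vb := by
        have h6 := congrArg (fun z => (s * (1 - θa))⁻¹ • z) key
        simp only [inv_smul_smul₀ hc.ne'] at h6
        rw [h6, smul_add, inv_smul_smul₀ hc.ne', div_eq_inv_mul, mul_smul]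
        module
      have hmem : qa + (t / (s * (1 - θa))) • vb ∈ SR (A \ {x}) :=
        SR_absorb hqa (CC_smul (div_nonneg ht.le hc.le) hvb)
      rwa [← hxq] at hmem
    · exfalso
      apply hnx
      have hca : 0 < s * (1 - θa) := mul_pos hs (by linarith)
      have hcb : 0 < t * (1 - θb) := mul_pos ht (by linarith)
      have hc : 0 < s * (1 - θa) + t * (1 - θb) := by linarith
      have h2 : (s * θa + t * θb) • x +
          ((s * (1 - θa)) • qa + (t * (1 - θb)) • qb) = x := by
        have e : (s * θa + t * θb) • x + ((s * (1 - θa)) • qa + (t * (1 - θb)) • qb)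
            = s • (θa • x + (1 - θa) • qa) + t • (θb • x + (1 - θb) • qb) := by module
        rw [e, habx]
      have h3 : s * θa + t * θb = 1 - (s * (1 - θa) + t * (1 - θb)) := by
        linear_combination hst
      rw [h3] at h2
      have h5 : (s * (1 - θa)) • qa + (t * (1 - θb)) • qb
          = x - (1 - (s * (1 - θa) + t * (1 - θb))) • x := eq_sub_of_add_eq' h2
      have key : (s * (1 - θa) + t * (1 - θb)) • x
          = (s * (1 - θa)) • qa + (t * (1 - θb)) • qb := by
        rw [h5]; module
      have hxq : x = (s * (1 - θa) / (s * (1 - θa) + t * (1 - θb))) • qa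
          + (t * (1 - θb) / (s * (1 - θa) + t * (1 - θb))) • qb := by
        have h6 := congrArg (fun z => (s * (1 - θa) + t * (1 - θb))⁻¹ • z) key
        simp only [inv_smul_smul₀ hc.ne'] at h6
        rw [h6, smul_add, div_eq_inv_mul, div_eq_inv_mul, mul_smul, mul_smul]
        module
      have hmem : (s * (1 - θa) / (s * (1 - θa) + t * (1 - θb))) • qa
          + (t * (1 - θb) / (s * (1 - θa) + t * (1 - θb))) • qb ∈ SR (A \ {x}) :=
        (convex_SR (A \ {x})) hqa hqb (div_nonneg hca.le hc.le) (div_nonneg hcb.le hc.le)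
          (by rw [← add_div, div_self hc.ne'])
      rwa [← hxq] at hmem

end NP
end part3

section part4
namespace NP
variable {m : ℕ}

lemma extremePoints_restrict {A B : Set (Fin m → ℝ)} {x : Fin m → ℝ} (hBA : B ⊆ A)
    (hxB : x ∈ B) (hx : x ∈ A.extremePoints ℝ) : x ∈ B.extremePoints ℝ :=
  ⟨hxB, fun a ha b hb h => hx.2 (hBA ha) (hBA hb) h⟩

lemma finset_SR (F : Finset (Fin m → ℝ)) :
    SR (F : Set (Fin m → ℝ)) ⊆ SR ((SR (F : Set (Fin m → ℝ))).extremePoints ℝ) := by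
  classical
  induction F using Finset.strongInductionOn with
  | _ F ih =>
    by_cases hall : ∀ x ∈ F, x ∈ (SR (F : Set (Fin m → ℝ))).extremePoints ℝ
    · exact SR_closure (fun a ha => subset_SR _ (hall a (by exact_mod_cast ha)))
    · push_neg at hall
      obtain ⟨x₀, hx₀F, hx₀⟩ := hall
      have hx₀SR : x₀ ∈ SR (F : Set (Fin m → ℝ)) := subset_SR _ (by exact_mod_cast hx₀F)
      have hx₀mem : x₀ ∈ SR ((F : Set (Fin m → ℝ)) \ {x₀}) := by
        by_contra h
        exact hx₀ (extreme_of_not_mem hx₀SR h)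
      have hcoe : ((F.erase x₀ : Finset _) : Set (Fin m → ℝ)) = (F : Set (Fin m → ℝ)) \ {x₀} :=
        Finset.coe_erase x₀ F
      have hEq : SR ((F.erase x₀ : Finset _) : Set (Fin m → ℝ)) = SR (F : Set (Fin m → ℝ)) := by
        apply le_antisymm
        · exact SR_mono (by rw [hcoe]; exact Set.diff_subset)
        · apply SR_closure
          intro a ha
          by_cases hax : a = x₀
          · subst hax; rwa [hcoe]
          · exact subset_SR _ (by rw [hcoe]; exact ⟨ha, hax⟩)
      have := ih (F.erase x₀) (Finset.erase_ssubset hx₀F)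
      rw [hEq] at this
      exact this

lemma exists_min_le (X : Set (Fin m → ℕ)) : ∀ (n : ℕ) (x : Fin m → ℕ), (∑ i, x i) = n →
    x ∈ X → ∃ y ∈ X, (∀ z ∈ X, z ≤ y → z = y) ∧ y ≤ x := by
  intro n
  induction n using Nat.strong_induction_on with
  | _ n ih =>
    intro x hsum hx
    by_cases hmin : ∀ z ∈ X, z ≤ x → z = x
    · exact ⟨x, hx, hmin, le_refl x⟩
    · push_neg at hmin
      obtain ⟨z, hzX, hzx, hne⟩ := hmin
      have hlt : ∑ i, z i < n := by
        rw [← hsum]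
        obtain ⟨i, hi⟩ : ∃ i, z i ≠ x i := by
          by_contra h; push_neg at h; exact hne (funext h)
        exact Finset.sum_lt_sum (fun j _ => hzx j)
          ⟨i, Finset.mem_univ i, lt_of_le_of_ne (hzx i) hi⟩
      obtain ⟨y, hy1, hy2, hy3⟩ := ih _ hlt z rfl hzX
      exact ⟨y, hy1, hy2, le_trans hy3 hzx⟩

lemma exists_min_finset (X : Set (Fin m → ℕ)) :
    ∃ F : Finset (Fin m → ℕ), ↑F ⊆ X ∧ ∀ x ∈ X, ∃ y ∈ F, y ≤ x := by
  classical
  set M : Set (Fin m → ℕ) := {y | y ∈ X ∧ ∀ z ∈ X, z ≤ y → z = y} with hM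
  have hchain : IsAntichain (· ≤ ·) M := by
    intro a ha b hb hab h
    exact hab (hb.2 a ha.1 h)
  have hPWO : M.IsPWO :=
    Set.isPWO_of_wellQuasiOrderedLE M
  have hfin : M.Finite := hchain.finite_of_partiallyWellOrderedOn hPWO
  refine ⟨hfin.toFinset, ?_, ?_⟩
  · rw [Set.Finite.coe_toFinset]
    exact fun y hy => hy.1
  · intro x hx
    obtain ⟨y, hyX, hymin, hyx⟩ := exists_min_le X (∑ i, x i) x rfl hx
    exact ⟨y, by simp only [Set.Finite.mem_toFinset]; exact ⟨hyX, hymin⟩, hyx⟩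

end NP
end part4

section part5
namespace NP
variable {m : ℕ}

lemma newton_mono {X Y : Set (Fin m → ℕ)} (h : X ⊆ Y) : newton X ⊆ newton Y := by
  rw [newton_eq, newton_eq]
  exact SR_mono (Set.image_mono h)

lemma emb_add_mem_newton {X : Set (Fin m → ℕ)} {x : Fin m → ℕ} (hx : x ∈ X) (u : Fin m → ℕ) :
    emb (x + u) ∈ newton X :=
  subset_convexHull ℝ _ ⟨x + u, ⟨x, hx, u, Set.mem_univ u, rfl⟩, rfl⟩

lemma emb_mem_newton {X : Set (Fin m → ℕ)} {x : Fin m → ℕ} (hx : x ∈ X) : emb x ∈ newton X := by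
  have := emb_add_mem_newton hx 0
  rwa [add_zero] at this

lemma image_diff_emb (X : Set (Fin m → ℕ)) (x : Fin m → ℕ) :
    emb '' (X \ {x}) = emb '' X \ {emb x} := by
  rw [Set.image_diff emb_inj, Set.image_singleton]

lemma eq_of_extreme_add {X : Set (Fin m → ℕ)} {y u : Fin m → ℕ} (hyX : y ∈ X)
    (hext : emb (y + u) ∈ (newton X).extremePoints ℝ) : u = 0 := by
  have h1 : emb y ∈ newton X := emb_mem_newton hyX
  have h2 : emb (y + u + u) ∈ newton X := by
    have := emb_add_mem_newton hyX (u + u)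
    rwa [← add_assoc] at this
  have hseg : emb (y + u) ∈ openSegment ℝ (emb y) (emb (y + u + u)) := by
    refine ⟨1/2, 1/2, by norm_num, by norm_num, by norm_num, ?_⟩
    funext i
    simp only [Pi.add_apply, Pi.smul_apply, smul_eq_mul, emb]
    push_cast
    ring
  have := hext.2 h1 h2 hseg
  have hy_eq : y = y + u := emb_inj this
  have : y + u = y := hy_eq.symm
  rwa [add_eq_left] at this

lemma extremePoints_newton (X : Set (Fin m → ℕ)) :
    (newton X).extremePoints ℝ = emb '' vert X := by
  ext p
  constructor
  · intro hp
    have hp' : p ∈ emb '' (X + Set.univ) :=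
      extremePoints_convexHull_subset (𝕜 := ℝ) hp
    obtain ⟨w, hw, rfl⟩ := hp'
    obtain ⟨y, hyX, u, -, rfl⟩ := hw
    have hu : u = 0 := eq_of_extreme_add hyX hp
    subst hu
    simp only [add_zero] at hp ⊢
    refine ⟨y, ⟨hyX, ?_⟩, rfl⟩
    intro hmem
    have hsub : newton (X \ {y}) ⊆ newton X := newton_mono Set.diff_subset
    have hext' : emb y ∈ (newton (X \ {y})).extremePoints ℝ :=
      extremePoints_restrict hsub hmem hp
    have hmem2 : emb y ∈ emb '' ((X \ {y}) + Set.univ) :=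
      extremePoints_convexHull_subset (𝕜 := ℝ) hext'
    obtain ⟨w, hw, hzy⟩ := hmem2
    obtain ⟨z, hz, u', -, rfl⟩ := hw
    have hext2 : emb (z + u') ∈ (newton X).extremePoints ℝ := by rw [hzy]; exact hp
    have hu' : u' = 0 := eq_of_extreme_add hz.1 hext2
    subst hu'
    simp only [add_zero] at hzy
    exact hz.2 (emb_inj hzy)
  · rintro ⟨x, ⟨hxX, hxnot⟩, rfl⟩
    rw [newton_eq]
    refine extreme_of_not_mem (subset_SR (emb '' X) ⟨x, hxX, rfl⟩) ?_
    rw [← image_diff_emb, ← newton_eq]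
    exact hxnot

lemma newton_vert_eq (X : Set (Fin m → ℕ)) : newton (vert X) = newton X := by
  apply le_antisymm (newton_mono (fun x hx => hx.1))
  obtain ⟨F, hFX, hmin⟩ := exists_min_finset X
  have h1 : emb '' X ⊆ SR (emb '' (F : Set (Fin m → ℕ))) := by
    rintro _ ⟨x, hx, rfl⟩
    obtain ⟨y, hyF, hyx⟩ := hmin x hx
    have hdiff : emb x - emb y ∈ CC m := by
      intro i
      simp only [Pi.sub_apply, emb, sub_nonneg, Nat.cast_le]
      exact hyx i
    have hx_eq : emb x = emb y + (emb x - emb y) := by ring_nf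
    rw [hx_eq]
    exact SR_absorb (subset_SR _ ⟨y, by exact_mod_cast hyF, rfl⟩) hdiff
  have hXF : SR (emb '' X) = SR (emb '' (F : Set (Fin m → ℕ))) :=
    le_antisymm (SR_closure h1) (SR_mono (Set.image_mono hFX))
  classical
  set G : Finset (Fin m → ℝ) := F.image emb with hGdef
  have hG : (G : Set (Fin m → ℝ)) = emb '' (F : Set (Fin m → ℕ)) := by
    rw [hGdef]; exact Finset.coe_image
  have hD := finset_SR G
  rw [hG, ← hXF, ← newton_eq, extremePoints_newton, ← newton_eq] at hD
  exact hD

end NP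
end part5


theorem vert_eq_iff_newton_eq (m : ℕ) (hm : 1 ≤ m) (X Y : Set (Fin m → ℕ)) :
    vert X = vert Y ↔ newton X = newton Y := by
  constructor
  · intro h
    rw [← NP.newton_vert_eq X, ← NP.newton_vert_eq Y, h]
  · intro h
    have h2 : emb '' vert X = emb '' vert Y := by
      rw [← NP.extremePoints_newton, ← NP.extremePoints_newton, h]
    exact Set.image_injective.mpr NP.emb_inj h2

end
end

section
/- Let m ≥ 1 and let X, Y ⊆ ℤ_{≥0}^m. Then Vert(Vert(X) + Vert(Y)) = Vert(Vert(X) + Y) = Vert(X + Vert(Y)) = Vert(X + Y), where + denotes the Minkowski sum of subsets of ℤ_{≥0}^m. -/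
open Pointwise

noncomputable section

namespace VertAux

variable {m : ℕ}

lemma emb_add (x y : Fin m → ℕ) : emb (x + y) = emb x + emb y := by
  funext i; simp [emb]

lemma emb_zero : emb (0 : Fin m → ℕ) = 0 := by funext i; simp [emb]

lemma emb_le_emb {x y : Fin m → ℕ} (h : x ≤ y) : emb x ≤ emb y := fun i => by
  show ((x i : ℕ) : ℝ) ≤ ((y i : ℕ) : ℝ); exact_mod_cast h i

lemma le_of_emb_le {x y : Fin m → ℕ} (h : emb x ≤ emb y) : x ≤ y := fun i => by
  have : ((x i : ℕ) : ℝ) ≤ ((y i : ℕ) : ℝ) := h i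
  exact_mod_cast this

lemma emb_inj {x y : Fin m → ℕ} (h : emb x = emb y) : x = y :=
  funext fun i => Nat.cast_injective (congrFun h i)

lemma emb_nonneg (x : Fin m → ℕ) : 0 ≤ emb x := fun i => Nat.cast_nonneg _

/-- `emb` as an additive monoid hom. -/
def embHom : (Fin m → ℕ) →+ (Fin m → ℝ) where
  toFun := emb
  map_zero' := emb_zero
  map_add' := emb_add

lemma image_emb_add (A B : Set (Fin m → ℕ)) :
    emb '' (A + B) = emb '' A + emb '' B := by
  have := Set.image_add (embHom (m := m)) (s := A) (t := B)
  simpa [embHom] using this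

lemma ortho_subset :
    Set.Ici (0 : Fin m → ℝ) ⊆ convexHull ℝ (emb '' (Set.univ : Set (Fin m → ℕ))) := by
  intro v hv
  have hv' : (0 : Fin m → ℝ) ≤ v := hv
  set N : ℕ := ⌊∑ i, v i⌋₊ + 1 with hN
  have hNpos : (0:ℝ) < N := by exact_mod_cast Nat.succ_pos _
  have hsum : ∑ i, v i < N := by
    have := Nat.lt_floor_add_one (∑ i, v i)
    push_cast [hN]; push_cast at this; linarith
  set w : Option (Fin m) → ℝ := fun o => o.elim (1 - (∑ i, v i) / N) (fun i => v i / N) with hw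
  set z : Option (Fin m) → (Fin m → ℝ) := fun o => o.elim 0 (fun i => emb (Pi.single i N)) with hz
  have key : ∑ o : Option (Fin m), w o • z o ∈ convexHull ℝ (emb '' (Set.univ : Set (Fin m → ℕ))) := by
    apply Convex.sum_mem (convex_convexHull _ _)
    · rintro (_|i) -
      · simp only [hw, Option.elim]
        have : (∑ i, v i) / N ≤ 1 := by
          rw [div_le_one hNpos]; linarith
        linarith
      · simp only [hw, Option.elim]
        exact div_nonneg (hv' i) hNpos.le
    · rw [Fintype.sum_option]
      simp only [hw, Option.elim]
      rw [← Finset.sum_div]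
      ring_nf
    · rintro (_|i) -
      · simp only [hz, Option.elim]
        rw [← emb_zero]
        exact subset_convexHull _ _ (Set.mem_image_of_mem _ (Set.mem_univ _))
      · exact subset_convexHull _ _ (Set.mem_image_of_mem _ (Set.mem_univ _))
  have hcalc : ∑ o : Option (Fin m), w o • z o = v := by
    rw [Fintype.sum_option]
    simp only [hw, hz, Option.elim, smul_zero, zero_add]
    have hsingle : ∀ i : Fin m, (v i / N) • emb (Pi.single i N) = Pi.single i (v i) := by
      intro i
      funext j
      rcases eq_or_ne j i with rfl | hji
      · simp only [emb, Pi.single_apply, Pi.smul_apply, if_pos rfl, ite_true, smul_eq_mul]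
        field_simp
      · simp [emb, Pi.single_apply, Pi.smul_apply, hji]
    rw [Finset.sum_congr rfl fun i _ => hsingle i]
    exact Finset.univ_sum_single v
  rwa [hcalc] at key

lemma newton_add_ortho (W : Set (Fin m → ℕ)) :
    newton W + Set.Ici (0 : Fin m → ℝ) ⊆ newton W := by
  have h1 : newton W + Set.Ici (0 : Fin m → ℝ) ⊆
      convexHull ℝ (emb '' (W + Set.univ)) + convexHull ℝ (emb '' (Set.univ : Set (Fin m → ℕ))) :=
    Set.add_subset_add Set.Subset.rfl ortho_subset
  refine h1.trans ?_
  rw [← convexHull_add, ← image_emb_add, add_assoc, Set.univ_add_univ]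
  exact Set.Subset.rfl

lemma mem_newton_add {W : Set (Fin m → ℕ)} {p v : Fin m → ℝ}
    (hp : p ∈ newton W) (hv : 0 ≤ v) : p + v ∈ newton W :=
  newton_add_ortho W (Set.add_mem_add hp hv)

lemma newton_mono {A B : Set (Fin m → ℕ)} (h : A ⊆ B) : newton A ⊆ newton B :=
  convexHull_mono (Set.image_mono  (Set.add_subset_add_right h))

lemma mem_newton {W : Set (Fin m → ℕ)} {x : Fin m → ℕ} (hx : x ∈ W) :
    emb x ∈ newton W := by
  apply subset_convexHull
  refine Set.mem_image_of_mem _ ?_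
  have := Set.add_mem_add hx (Set.mem_univ (0 : Fin m → ℕ))
  rwa [add_zero] at this

lemma newton_eq_hull_add (F : Set (Fin m → ℕ)) :
    newton F = convexHull ℝ (emb '' F) + Set.Ici (0 : Fin m → ℝ) := by
  apply Set.Subset.antisymm
  · apply convexHull_min
    · rintro _ ⟨c, hc, rfl⟩
      rcases Set.mem_add.1 hc with ⟨x, hx, u, -, rfl⟩
      rw [emb_add]
      exact Set.add_mem_add (subset_convexHull _ _ (Set.mem_image_of_mem _ hx)) (emb_nonneg u)
    · exact (convex_convexHull _ _).add (convex_Ici _)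
  · rintro _ ⟨p, hp, v, hv, rfl⟩
    have hp' : p ∈ newton F :=
      convexHull_mono (Set.image_mono  (by
        intro x hx
        have := Set.add_mem_add hx (Set.mem_univ (0 : Fin m → ℕ))
        rwa [add_zero] at this)) hp
    exact mem_newton_add hp' hv

lemma isPWO_nat (s : Set (Fin m → ℕ)) : s.IsPWO := by
  haveI h : ∀ i : Fin m, IsWellOrder ((fun _ : Fin m => ℕ) i) (· < ·) := fun _ => inferInstance
  exact Set.isPWO_of_wellQuasiOrderedLE s

/-- Minimal elements of the up-closure of `W`. -/
def mins (W : Set (Fin m → ℕ)) : Set (Fin m → ℕ) :=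
  {u ∈ W + Set.univ | ∀ w ∈ W + Set.univ, w ≤ u → w = u}

lemma mins_finite (W : Set (Fin m → ℕ)) : (mins W).Finite := by
  have hanti : IsAntichain (· ≤ ·) (mins W) := by
    intro a ha b hb hab hle
    exact hab (hb.2 a ha.1 hle)
  exact hanti.finite_of_partiallyWellOrderedOn (isPWO_nat (mins W))

lemma mins_subset (W : Set (Fin m → ℕ)) : mins W ⊆ W := by
  rintro u ⟨hu, hmin⟩
  rcases Set.mem_add.1 hu with ⟨x, hx, v, -, rfl⟩
  have hxU : x ∈ W + Set.univ := by
    have := Set.add_mem_add hx (Set.mem_univ (0 : Fin m → ℕ))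
    rwa [add_zero] at this
  have hxle : x ≤ x + v := le_add_of_nonneg_right (by intro i; exact Nat.zero_le _)
  have := hmin x hxU hxle
  rwa [← this]

lemma exists_min_le (W : Set (Fin m → ℕ)) {u : Fin m → ℕ} (hu : u ∈ W + Set.univ) :
    ∃ a ∈ mins W, a ≤ u := by
  set s : Set (Fin m → ℕ) := (W + Set.univ) ∩ Set.Iic u with hs
  have hswf : s.IsWF := (isPWO_nat s).isWF
  have hsne : s.Nonempty := ⟨u, hu, Set.mem_Iic.2 le_rfl⟩
  refine ⟨hswf.min hsne, ⟨(hswf.min_mem hsne).1, ?_⟩, (hswf.min_mem hsne).2⟩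
  intro w hw hle
  have hwmem : w ∈ s := ⟨hw, Set.mem_Iic.2 (hle.trans (Set.mem_Iic.1 (hswf.min_mem hsne).2))⟩
  by_contra hne
  exact hswf.not_lt_min hsne hwmem (lt_of_le_of_ne hle hne)

lemma mins_add_univ (W : Set (Fin m → ℕ)) : mins W + Set.univ = W + Set.univ := by
  apply Set.Subset.antisymm
  · have h1 : mins W ⊆ W + Set.univ := fun u hu => hu.1
    have := Set.add_subset_add_right (t := Set.univ) h1
    rwa [add_assoc, Set.univ_add_univ] at this
  · intro u hu
    obtain ⟨a, ha, hle⟩ := exists_min_le W hu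
    have : u = a + (u - a) := by
      funext i; exact (Nat.add_sub_cancel' (hle i)).symm
    rw [this]
    exact Set.add_mem_add ha (Set.mem_univ _)

lemma newton_mins (W : Set (Fin m → ℕ)) : newton (mins W) = newton W := by
  unfold newton
  rw [mins_add_univ]

lemma newton_isClosed (W : Set (Fin m → ℕ)) : IsClosed (newton W) := by
  rw [← newton_mins, newton_eq_hull_add]
  exact IsClosed.add_left_of_isCompact isClosed_Ici
    (((mins_finite W).image emb).isCompact_convexHull ℝ)

lemma f_nonneg {f : (Fin m → ℝ) →L[ℝ] ℝ} (h : ∀ i, 0 ≤ f (Pi.single i 1))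
    {v : Fin m → ℝ} (hv : 0 ≤ v) : 0 ≤ f v := by
  have hv' : v = ∑ i, v i • (Pi.single i (1:ℝ) : Fin m → ℝ) := by
    have : ∀ i : Fin m, v i • (Pi.single i (1:ℝ) : Fin m → ℝ) = Pi.single i (v i) := by
      intro i; funext j
      rcases eq_or_ne j i with rfl | hji
      · simp [Pi.single_apply]
      · simp [Pi.single_apply, hji]
    rw [Finset.sum_congr rfl fun i _ => this i, Finset.univ_sum_single]
  rw [hv', map_sum]
  apply Finset.sum_nonneg
  intro i _
  rw [map_smul]
  exact mul_nonneg (hv i) (h i)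

lemma tail_lemma {G : Set (Fin m → ℝ)} {f : (Fin m → ℝ) →L[ℝ] ℝ} {c : Fin m → ℝ}
    (hc : c ∈ convexHull ℝ G) (hf : ∀ g ∈ G, f c ≤ f g)
    (heq : ∀ g ∈ G, f g = f c → c ≤ g) : c ∈ G := by
  rw [convexHull_eq] at hc
  obtain ⟨ι, t, w, z, hw0, hw1, hzG, hcm⟩ := hc
  rw [Finset.centerMass_eq_of_sum_1 _ _ hw1] at hcm
  have hfc : ∑ i ∈ t, w i * (f (z i) - f c) = 0 := by
    have h1 : f (∑ i ∈ t, w i • z i) = f c := by rw [hcm]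
    rw [map_sum] at h1
    simp only [map_smul, smul_eq_mul] at h1
    have h2 : ∑ i ∈ t, w i * f c = f c := by rw [← Finset.sum_mul, hw1, one_mul]
    calc ∑ i ∈ t, w i * (f (z i) - f c) = (∑ i ∈ t, w i * f (z i)) - ∑ i ∈ t, w i * f c := by
          rw [← Finset.sum_sub_distrib]; congr 1; funext i; ring
      _ = 0 := by rw [h1, h2, sub_self]
  have hterm : ∀ i ∈ t, w i ≠ 0 → f (z i) = f c := by
    have := (Finset.sum_eq_zero_iff_of_nonneg (fun i hi =>
      mul_nonneg (hw0 i hi) (sub_nonneg.2 (hf _ (hzG i hi))))).1 hfc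
    intro i hi hwi
    have h := this i hi
    rcases mul_eq_zero.1 h with h' | h'
    · exact absurd h' hwi
    · linarith [sub_eq_zero.1 h']
  have hzc : ∀ i ∈ t, w i ≠ 0 → z i = c := by
    intro i hi hwi
    have hle : ∀ j ∈ t, w j ≠ 0 → c ≤ z j := fun j hj hwj =>
      heq _ (hzG j hj) (hterm j hj hwj)
    funext k
    have hcoord : ∑ j ∈ t, w j * (z j k - c k) = 0 := by
      have h1 : (∑ j ∈ t, w j • z j) k = c k := by rw [hcm]
      rw [Finset.sum_apply] at h1
      simp only [Pi.smul_apply, smul_eq_mul] at h1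
      have h2 : ∑ j ∈ t, w j * c k = c k := by rw [← Finset.sum_mul, hw1, one_mul]
      calc ∑ j ∈ t, w j * (z j k - c k) = (∑ j ∈ t, w j * z j k) - ∑ j ∈ t, w j * c k := by
            rw [← Finset.sum_sub_distrib]; congr 1; funext j; ring
        _ = 0 := by rw [h1, h2, sub_self]
    have hterm2 := (Finset.sum_eq_zero_iff_of_nonneg (fun j hj => ?_)).1 hcoord i hi
    · rcases mul_eq_zero.1 hterm2 with h' | h'
      · exact absurd h' hwi
      · linarith [sub_eq_zero.1 h']
    · rcases eq_or_ne (w j) 0 with h' | h'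
      · rw [h', zero_mul]
      · exact mul_nonneg (hw0 j hj) (sub_nonneg.2 (hle j hj h' k))
  obtain ⟨i, hi, hwi⟩ : ∃ i ∈ t, w i ≠ 0 := by
    by_contra h
    push_neg at h
    rw [Finset.sum_eq_zero h] at hw1
    exact one_ne_zero hw1.symm
  rw [← hzc i hi hwi]
  exact hzG i hi

lemma newton_subset_join (A : Set (Fin m → ℕ)) (z : Fin m → ℕ) :
    newton A ⊆ convexHull ℝ (newton (A \ {z}) ∪ Set.Ici (emb z)) := by
  apply convexHull_min
  · rintro _ ⟨c, hc, rfl⟩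
    rcases Set.mem_add.1 hc with ⟨x, hx, u, -, rfl⟩
    rcases eq_or_ne x z with rfl | hxz
    · refine subset_convexHull _ _ (Set.mem_union_right _ ?_)
      rw [emb_add]
      exact le_add_of_nonneg_right (emb_nonneg u)
    · refine subset_convexHull _ _ (Set.mem_union_left _ ?_)
      rw [emb_add]
      exact mem_newton_add (mem_newton ⟨hx, hxz⟩) (emb_nonneg u)
  · exact convex_convexHull _ _

lemma newton_def (S : Set (Fin m → ℕ)) :
    newton S = convexHull ℝ (emb '' (S + Set.univ)) := rfl

lemma sep_core {z : Fin m → ℕ} {W S : Set (Fin m → ℕ)}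
    (hz : emb z ∉ newton W)
    (hS : ∀ b ∈ S, b ≠ z ∧ emb b ∈ convexHull ℝ (newton W ∪ Set.Ici (emb z))) :
    emb z ∉ newton S := by
  intro hmem
  obtain ⟨f, hf1, hf2⟩ : ∃ f : (Fin m → ℝ) →L[ℝ] ℝ,
      (∀ v : Fin m → ℝ, 0 ≤ v → 0 ≤ f v) ∧ (∀ p ∈ newton W, f (emb z) < f p) := by
    rcases (newton W).eq_empty_or_nonempty with hW | ⟨p0, hp0⟩
    · exact ⟨0, by simp, by simp [hW]⟩
    · obtain ⟨f, u, hu1, hu2⟩ := geometric_hahn_banach_point_closed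
        (convex_convexHull _ _) (newton_isClosed W) hz
      refine ⟨f, ?_, fun p hp => hu1.trans (hu2 p hp)⟩
      intro v hv
      apply f_nonneg ?_ hv
      intro i
      by_contra hneg
      push_neg at hneg
      set t : ℝ := (f p0 - u + 1) / (-(f (Pi.single i 1))) with ht
      have hfp0 : u < f p0 := hu2 p0 hp0
      have htpos : 0 < t := by
        apply div_pos (by linarith) (by linarith)
      have hmem2 : p0 + t • (Pi.single i 1 : Fin m → ℝ) ∈ newton W := by
        apply mem_newton_add hp0
        intro j
        rcases eq_or_ne j i with rfl | hji
        · simp [Pi.single_apply, htpos.le]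
        · simp [Pi.single_apply, hji]
      have := hu2 _ hmem2
      rw [map_add, map_smul, smul_eq_mul] at this
      rw [ht] at this
      have h3 := div_mul_cancel₀ (f p0 - u + 1) (show -f (Pi.single i 1) ≠ 0 by linarith)
      nlinarith [h3, this]
  -- per-generator claim
  have claim : ∀ b ∈ S, ∀ u : Fin m → ℕ,
      f (emb z) ≤ f (emb (b + u)) ∧ (f (emb (b + u)) = f (emb z) → emb z ≤ emb b) := by
    intro b hb u
    obtain ⟨hbz, hbmem⟩ := hS b hb
    have hfu : 0 ≤ f (emb u) := hf1 _ (emb_nonneg u)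
    have hsplit : emb (b + u) = emb b + emb u := emb_add b u
    rcases (newton W).eq_empty_or_nonempty with hW | hWne
    · rw [hW, Set.empty_union, (convex_Ici _).convexHull_eq] at hbmem
      have hQ : emb z ≤ emb b := hbmem
      have hle : f (emb z) ≤ f (emb b) := by
        have h0 : 0 ≤ f (emb b - emb z) := hf1 _ (by simpa [sub_nonneg] using hQ)
        rw [map_sub] at h0; linarith
      constructor
      · rw [hsplit, map_add]; linarith
      · intro _; exact hQ
    · have hconv : Convex ℝ (newton W) := convex_convexHull ℝ _
      rw [convexHull_union hWne Set.nonempty_Ici, hconv.convexHull_eq,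
        (convex_Ici _).convexHull_eq, mem_convexJoin] at hbmem
      obtain ⟨p, hp, q, hq, hseg⟩ := hbmem
      obtain ⟨α, β, hα, hβ, hαβ, hpq⟩ := hseg
      have hfq : f (emb z) ≤ f q := by
        have h0 : 0 ≤ f (q - emb z) := hf1 _ (by simpa [sub_nonneg] using hq)
        rw [map_sub] at h0; linarith
      have hfp : f (emb z) < f p := hf2 p hp
      have hfb : f (emb b) = α * f p + β * f q := by
        rw [← hpq, map_add, map_smul, map_smul, smul_eq_mul, smul_eq_mul]
      have bge : f (emb z) ≤ f (emb b) := by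
        have h1 : α * f (emb z) ≤ α * f p := mul_le_mul_of_nonneg_left hfp.le hα
        have h2 : β * f (emb z) ≤ β * f q := mul_le_mul_of_nonneg_left hfq hβ
        have h0 : (α + β) * f (emb z) = f (emb z) := by rw [hαβ, one_mul]
        nlinarith [h0, h1, h2, hfb]
      constructor
      · rw [hsplit, map_add]; linarith
      · intro heq
        rw [hsplit, map_add] at heq
        have hfbz : f (emb b) = f (emb z) := by linarith
        have hα0 : α = 0 := by
          by_contra hα'
          have hαpos : 0 < α := lt_of_le_of_ne hα (Ne.symm hα')
          have h1 : α * f (emb z) < α * f p := mul_lt_mul_of_pos_left hfp hαpos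
          have h2 : β * f (emb z) ≤ β * f q := mul_le_mul_of_nonneg_left hfq hβ
          have h0 : (α + β) * f (emb z) = f (emb z) := by rw [hαβ, one_mul]
          nlinarith [h0, h1, h2, hfb, hfbz]
        have hβ1 : β = 1 := by linarith
        have : emb b = q := by
          rw [← hpq, hα0, hβ1]; simp
        rw [this]
        exact hq
  -- apply the tail lemma
  rw [newton_def] at hmem
  have hG1 : ∀ g ∈ emb '' (S + Set.univ), f (emb z) ≤ f g := by
    rintro _ ⟨c, hc, rfl⟩
    rcases Set.mem_add.1 hc with ⟨b, hb, u, -, rfl⟩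
    exact (claim b hb u).1
  have hG2 : ∀ g ∈ emb '' (S + Set.univ), f g = f (emb z) → emb z ≤ g := by
    rintro _ ⟨c, hc, rfl⟩
    rcases Set.mem_add.1 hc with ⟨b, hb, u, -, rfl⟩
    intro heq
    have := (claim b hb u).2 heq
    calc emb z ≤ emb b := this
      _ ≤ emb b + emb u := le_add_of_nonneg_right (emb_nonneg u)
      _ = emb (b + u) := (emb_add b u).symm
  have hzG := tail_lemma hmem hG1 hG2
  obtain ⟨c, hc, hceq⟩ := hzG
  rcases Set.mem_add.1 hc with ⟨b, hb, u, -, rfl⟩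
  -- emb (b + u) = emb z
  have hbu : b + u = z := emb_inj hceq
  have hblez : b ≤ z := by
    intro i
    show b i ≤ z i
    have h : b i + u i = z i := congrFun hbu i
    omega
  have hzleb : z ≤ b := by
    have := (claim b hb u).2 (by rw [hceq])
    exact le_of_emb_le this
  exact (hS b hb).1 (le_antisymm hblez hzleb)

lemma reduce : ∀ (n : ℕ) (F : Set (Fin m → ℕ)), F.Finite → F.ncard ≤ n →
    ∃ F', F' ⊆ F ∧ newton F' = newton F ∧ ∀ z ∈ F', emb z ∉ newton (F' \ {z}) := by
  intro n
  induction n with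
  | zero =>
    intro F hF hcard
    have : F = ∅ := by
      rw [← Set.ncard_eq_zero hF]; omega
    subst this
    exact ⟨∅, Set.Subset.rfl, rfl, by simp⟩
  | succ n ih =>
    intro F hF hcard
    by_cases hgood : ∀ z ∈ F, emb z ∉ newton (F \ {z})
    · exact ⟨F, Set.Subset.rfl, rfl, hgood⟩
    · push_neg at hgood
      obtain ⟨z, hzF, hz⟩ := hgood
      have hne : (F \ {z}).ncard ≤ n := by
        have h1 : (F \ {z}).ncard = F.ncard - 1 := Set.ncard_diff_singleton_of_mem hzF
        have h2 : 0 < F.ncard := (Set.ncard_pos hF).2 ⟨z, hzF⟩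
        omega
      obtain ⟨F', h1, h2, h3⟩ := ih (F \ {z}) (hF.subset Set.diff_subset) hne
      refine ⟨F', h1.trans Set.diff_subset, ?_, h3⟩
      rw [h2]
      apply Set.Subset.antisymm (newton_mono Set.diff_subset)
      apply convexHull_min ?_ (convex_convexHull _ _)
      rintro _ ⟨c, hc, rfl⟩
      rcases Set.mem_add.1 hc with ⟨x, hx, u, -, rfl⟩
      rcases eq_or_ne x z with rfl | hxz
      · rw [emb_add]
        exact mem_newton_add hz (emb_nonneg u)
      · rw [emb_add]
        exact mem_newton_add (mem_newton ⟨hx, hxz⟩) (emb_nonneg u)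

lemma vert_subset (X : Set (Fin m → ℕ)) : vert X ⊆ X := fun _ hx => hx.1

lemma emb_mem_newton_vert (X : Set (Fin m → ℕ)) {x : Fin m → ℕ} (hx : x ∈ X) :
    emb x ∈ newton (vert X) := by
  obtain ⟨F', hF'sub, hnewt, hgood⟩ := reduce (mins X).ncard (mins X) (mins_finite X) le_rfl
  have hXF' : newton F' = newton X := hnewt.trans (newton_mins X)
  have hF'X : F' ⊆ X := hF'sub.trans (mins_subset X)
  have hvert : F' ⊆ vert X := by
    intro z hzF'
    refine ⟨hF'X hzF', ?_⟩
    apply sep_core (hgood z hzF')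
    rintro b ⟨hbX, hbz⟩
    refine ⟨hbz, ?_⟩
    have hb2 : emb b ∈ newton F' := by rw [hXF']; exact mem_newton hbX
    exact newton_subset_join F' z hb2
  have : emb x ∈ newton F' := by rw [hXF']; exact mem_newton hx
  exact newton_mono hvert this

lemma vert_congr {A B : Set (Fin m → ℕ)} (hAB : A ⊆ B)
    (h : ∀ b ∈ B, emb b ∈ newton A) : vert A = vert B := by
  ext x
  constructor
  · rintro ⟨hxA, hx⟩
    refine ⟨hAB hxA, ?_⟩
    apply sep_core hx
    rintro b ⟨hbB, hbx⟩
    exact ⟨hbx, newton_subset_join A x (h b hbB)⟩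
  · rintro ⟨hxB, hx⟩
    have hxA : x ∈ A := by
      by_contra hA
      have hsub : A ⊆ B \ {x} := fun a ha => ⟨hAB ha, fun he => hA (he ▸ ha)⟩
      exact hx (newton_mono hsub (h x hxB))
    exact ⟨hxA, fun hc => hx (newton_mono (Set.diff_subset_diff_left hAB) hc)⟩

lemma newton_translate (Z : Set (Fin m → ℕ)) (y : Fin m → ℕ) :
    newton Z + ({emb y} : Set (Fin m → ℝ)) = newton (Z + {y}) := by
  rw [newton_def, newton_def, ← convexHull_singleton (𝕜 := ℝ) (emb y), ← convexHull_add]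
  congr 1
  rw [← Set.image_singleton, ← image_emb_add]
  congr 1
  rw [add_right_comm]

lemma vert_add_left (X Y : Set (Fin m → ℕ)) :
    vert (vert X + Y) = vert (X + Y) := by
  apply vert_congr (Set.add_subset_add_right (vert_subset X))
  intro b hb
  rcases Set.mem_add.1 hb with ⟨x, hx, y, hy, rfl⟩
  have h1 : emb x ∈ newton (vert X) := emb_mem_newton_vert X hx
  have h2 : emb x + emb y ∈ newton (vert X) + ({emb y} : Set (Fin m → ℝ)) :=
    Set.add_mem_add h1 rfl
  rw [newton_translate] at h2
  rw [emb_add]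
  exact newton_mono (Set.add_subset_add_left (Set.singleton_subset_iff.2 hy)) h2

end VertAux


theorem vert_minkowski_props (m : ℕ) (hm : 1 ≤ m) (X Y : Set (Fin m → ℕ)) :
    vert (vert X + vert Y) = vert (vert X + Y) ∧
    vert (vert X + Y) = vert (X + vert Y) ∧
    vert (X + vert Y) = vert (X + Y) := by
  have h1 := VertAux.vert_add_left X Y
  have h2 : vert (X + vert Y) = vert (X + Y) := by
    rw [add_comm X (vert Y), add_comm X Y]
    exact VertAux.vert_add_left Y X
  have h3 : vert (vert X + vert Y) = vert (X + vert Y) :=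
    VertAux.vert_add_left X (vert Y)
  exact ⟨h3.trans (h2.trans h1.symm), h1.trans h2.symm, h2⟩

end
end

section
/- Let m ≥ 1. For any finite family {X_i}_{i∈I} of subsets X_i ⊆ ℤ_{≥0}^m, one has Vert(⋃_{i∈I} X_i) = ⊕_{i∈I} Vert(X_i) and Vert(Σ_{i∈I} X_i) = ⊙_{i∈I} Vert(X_i), where Σ denotes the iterated Minkowski sum; in particular, for any T ⊆ ℤ_{≥0}^m and n ≥ 1, Vert(nT) = Vert(T)^{⊙n} where nT denotes the n-fold Minkowski sum T + ⋯ + T. -/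
open Pointwise

noncomputable section

/-- Tropical sum of supports. -/
def oplus {m : ℕ} (S T : Set (Fin m → ℕ)) : Set (Fin m → ℕ) := vert (S ∪ T)

/-- Tropical product of supports (via Minkowski sum). -/
def odot {m : ℕ} (S T : Set (Fin m → ℕ)) : Set (Fin m → ℕ) := vert (S + T)

/-- `n`-fold Minkowski sum `nT = T + ⋯ + T`, with `0T = {(0,…,0)}`. -/
def nMink {m : ℕ} : ℕ → Set (Fin m → ℕ) → Set (Fin m → ℕ)
  | 0, _ => {0}
  | k + 1, T => T + nMink k T

/-- `n`-fold tropical power `S^{⊙n}`, with `S^{⊙0} = {(0,…,0)}`. -/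
def odotPow {m : ℕ} : ℕ → Set (Fin m → ℕ) → Set (Fin m → ℕ)
  | 0, _ => {0}
  | k + 1, S => odot S (odotPow k S)

namespace NewtonAux

variable {m : ℕ}

def orth (m : ℕ) : Set (Fin m → ℝ) := Set.univ.pi fun _ => Set.Ici 0

lemma mem_orth {v : Fin m → ℝ} : v ∈ orth m ↔ ∀ i, 0 ≤ v i := by
  simp [orth, Pi.le_def]

lemma orth_convex : Convex ℝ (orth m) := convex_pi fun _ _ => convex_Ici 0

lemma orth_zero : (0 : Fin m → ℝ) ∈ orth m := mem_orth.2 fun i => le_refl 0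

lemma orth_add {a b : Fin m → ℝ} (ha : a ∈ orth m) (hb : b ∈ orth m) : a + b ∈ orth m :=
  mem_orth.2 fun i => add_nonneg (mem_orth.1 ha i) (mem_orth.1 hb i)

lemma orth_smul {c : ℝ} {a : Fin m → ℝ} (hc : 0 ≤ c) (ha : a ∈ orth m) : c • a ∈ orth m :=
  mem_orth.2 fun i => mul_nonneg hc (mem_orth.1 ha i)

lemma emb_add (x y : Fin m → ℕ) : emb (x + y) = emb x + emb y := by
  funext i; simp [emb]

lemma emb_inj : Function.Injective (emb (m := m)) := fun x y h => by
  funext i; exact Nat.cast_injective (congrFun h i)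

lemma emb_mem_orth (x : Fin m → ℕ) : emb x ∈ orth m := mem_orth.2 fun i => Nat.cast_nonneg _

lemma hull_range_natCast : convexHull ℝ (Set.range ((↑) : ℕ → ℝ)) = Set.Ici 0 := by
  apply Set.Subset.antisymm
  · have hsub : Set.range ((↑) : ℕ → ℝ) ⊆ Set.Ici 0 := by
      intro z hz
      obtain ⟨n, rfl⟩ := hz
      exact Set.mem_Ici.2 (Nat.cast_nonneg n)
    exact convexHull_min hsub (convex_Ici 0)
  · intro r hr
    have h1 : ((⌊r⌋₊ : ℕ) : ℝ) ≤ r := Nat.floor_le hr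
    have h2 : r ≤ ((⌊r⌋₊ + 1 : ℕ) : ℝ) := by push_cast; linarith [Nat.lt_floor_add_one r]
    have h3 := segment_subset_convexHull (𝕜 := ℝ) (s := Set.range ((↑) : ℕ → ℝ))
      ⟨⌊r⌋₊, rfl⟩ ⟨⌊r⌋₊ + 1, rfl⟩
    apply h3
    rw [segment_eq_Icc (by push_cast; linarith : ((⌊r⌋₊ : ℕ) : ℝ) ≤ ((⌊r⌋₊ + 1 : ℕ) : ℝ))]
    exact ⟨h1, h2⟩

lemma image_emb_univ : emb '' (Set.univ : Set (Fin m → ℕ)) =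
    Set.univ.pi fun _ => Set.range ((↑) : ℕ → ℝ) := by
  ext v
  constructor
  · rintro ⟨x, -, rfl⟩
    intro i _
    exact ⟨x i, rfl⟩
  · intro hv
    choose f hf using fun i => hv i (Set.mem_univ i)
    exact ⟨f, Set.mem_univ f, funext fun i => hf i⟩

lemma hull_emb_univ : convexHull ℝ (emb '' (Set.univ : Set (Fin m → ℕ))) = orth m := by
  rw [image_emb_univ, convexHull_pi, orth]
  simp only [hull_range_natCast]

lemma image_emb_add (S T : Set (Fin m → ℕ)) : emb '' (S + T) = emb '' S + emb '' T := by
  ext z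
  simp only [Set.mem_add, Set.mem_image]
  constructor
  · rintro ⟨x, ⟨s, hs, t, ht, rfl⟩, rfl⟩
    exact ⟨emb s, ⟨s, hs, rfl⟩, emb t, ⟨t, ht, rfl⟩, (emb_add s t).symm⟩
  · rintro ⟨_, ⟨s, hs, rfl⟩, _, ⟨t, ht, rfl⟩, rfl⟩
    exact ⟨s + t, ⟨s, hs, t, ht, rfl⟩, emb_add s t⟩

lemma newton_eq (X : Set (Fin m → ℕ)) : newton X = convexHull ℝ (emb '' X) + orth m := by
  rw [newton, image_emb_add, convexHull_add, hull_emb_univ]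

lemma newton_mono {X Y : Set (Fin m → ℕ)} (h : X ⊆ Y) : newton X ⊆ newton Y :=
  convexHull_mono (Set.image_mono (Set.add_subset_add h (Set.Subset.refl _)))

lemma newton_convex (X : Set (Fin m → ℕ)) : Convex ℝ (newton X) := convex_convexHull ℝ _

lemma mem_newton {X : Set (Fin m → ℕ)} {x : Fin m → ℕ} (hx : x ∈ X) : emb x ∈ newton X :=
  subset_convexHull ℝ _ ⟨x, ⟨x, hx, 0, Set.mem_univ 0, add_zero x⟩, rfl⟩

lemma newton_add_orth {X : Set (Fin m → ℕ)} {p v : Fin m → ℝ}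
    (hp : p ∈ newton X) (hv : v ∈ orth m) : p + v ∈ newton X := by
  rw [newton_eq] at hp ⊢
  obtain ⟨c, hc, w, hw, rfl⟩ := hp
  exact ⟨c, hc, w + v, orth_add hw hv, (add_assoc c w v).symm⟩

lemma newton_empty : newton (∅ : Set (Fin m → ℕ)) = ∅ := by
  rw [newton]
  simp


lemma newton_split {X : Set (Fin m → ℕ)} {x : Fin m → ℕ} (hx : x ∈ X) :
    newton X = convexHull ℝ (newton (X \ {x}) ∪ ({emb x} + orth m)) := by
  apply Set.Subset.antisymm
  · rw [newton]
    apply convexHull_min ?_ (convex_convexHull ℝ _)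
    rintro _ ⟨w, ⟨y, hy, u, -, rfl⟩, rfl⟩
    apply subset_convexHull ℝ _
    by_cases hyx : y = x
    · subst hyx
      exact Or.inr ⟨emb y, rfl, emb u, emb_mem_orth u, (emb_add y u).symm⟩
    · exact Or.inl (subset_convexHull ℝ _
        ⟨y + u, ⟨y, ⟨hy, hyx⟩, u, Set.mem_univ u, rfl⟩, rfl⟩)
  · apply convexHull_min ?_ (newton_convex X)
    apply Set.union_subset
    · exact newton_mono Set.diff_subset
    · rintro _ ⟨a, ha, v, hv, rfl⟩
      obtain rfl : a = emb x := ha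
      exact newton_add_orth (mem_newton hx) hv

lemma extreme_subset_image (X : Set (Fin m → ℕ)) :
    Set.extremePoints ℝ (newton X) ⊆ emb '' X := by
  intro z hz
  have hz' : z ∈ emb '' (X + (Set.univ : Set (Fin m → ℕ))) :=
    extremePoints_convexHull_subset hz
  obtain ⟨w, ⟨y, hy, u, -, rfl⟩, rfl⟩ := hz'
  by_cases hu : u = 0
  · subst hu
    exact ⟨y, hy, show emb y = emb (y + 0) by rw [add_zero]⟩
  · exfalso
    have h1 : emb y ∈ newton X := mem_newton hy
    have h2 : emb (y + u + u) ∈ newton X :=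
      subset_convexHull ℝ _ ⟨y + u + u, ⟨y, hy, u + u, Set.mem_univ _, (add_assoc y u u).symm⟩, rfl⟩
    have hseg : emb (y + u) ∈ openSegment ℝ (emb y) (emb (y + u + u)) := by
      refine ⟨1/2, 1/2, by norm_num, by norm_num, by norm_num, ?_⟩
      funext i
      simp only [emb, Pi.add_apply, Pi.smul_apply, smul_eq_mul]
      push_cast
      ring
    have := hz.2 h1 h2 hseg
    have hyy : y = y + u := emb_inj this
    exact hu (by simpa using hyy.symm)

lemma vert_iff_extreme {X : Set (Fin m → ℕ)} {x : Fin m → ℕ} (hx : x ∈ X) :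
    x ∈ vert X ↔ emb x ∈ Set.extremePoints ℝ (newton X) := by
  constructor
  · rintro ⟨-, hv⟩
    refine ⟨mem_newton hx, ?_⟩
    intro a ha b hb hseg
    rw [newton_split hx] at ha hb
    obtain ⟨p, q, hp, hq, hpq, heq⟩ := hseg
    by_cases hNe : (X \ {x} : Set (Fin m → ℕ)) = ∅
    · rw [hNe, newton_empty, Set.empty_union,
        ((convex_singleton (emb x)).add orth_convex).convexHull_eq] at ha hb
      obtain ⟨a1, ha1, va, hva, rfl⟩ := ha
      obtain ⟨b1, hb1, vb, hvb, rfl⟩ := hb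
      obtain rfl : a1 = emb x := ha1
      obtain rfl : b1 = emb x := hb1
      have key : ∀ i, va i = 0 ∧ vb i = 0 := by
        intro i
        have h := congrFun heq i
        simp only [Pi.add_apply, Pi.smul_apply, smul_eq_mul] at h
        have hsum : p * va i + q * vb i = 0 := by
          linear_combination h - emb x i * hpq
        constructor
        · nlinarith [hsum, mem_orth.1 hva i, mem_orth.1 hvb i,
            mul_nonneg hq.le (mem_orth.1 hvb i), hp, hq]
        · nlinarith [hsum, mem_orth.1 hva i, mem_orth.1 hvb i,
            mul_nonneg hp.le (mem_orth.1 hva i), hp, hq]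
      have hva0 : va = 0 := funext fun i => (key i).1
      have hvb0 : vb = 0 := funext fun i => (key i).2
      · rw [hva0]; funext i; simp
    · have hNne : (newton (X \ {x})).Nonempty := by
        obtain ⟨y, hy⟩ := Set.nonempty_iff_ne_empty.2 hNe
        exact ⟨emb y, mem_newton hy⟩
      have hKne : ({emb x} + orth m : Set (Fin m → ℝ)).Nonempty :=
        ⟨emb x + 0, emb x, rfl, 0, orth_zero, rfl⟩
      rw [(newton_convex _).convexHull_union ((convex_singleton (emb x)).add orth_convex)
        hNne hKne, mem_convexJoin] at ha hb
      obtain ⟨n1, hn1, k1, hk1, s1, t1, hs1, ht1, hst1, habig⟩ := ha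
      obtain ⟨n2, hn2, k2, hk2, s2, t2, hs2, ht2, hst2, hbbig⟩ := hb
      obtain ⟨a1, ha1, v1, hv1, rfl⟩ := hk1
      obtain ⟨b1, hb1, v2, hv2, rfl⟩ := hk2
      obtain rfl : a1 = emb x := ha1
      obtain rfl : b1 = emb x := hb1
      have hEQ : (p * s1 + q * s2) • emb x = (p * s1) • n1 + (q * s2) • n2 +
          ((p * t1) • v1 + (q * t2) • v2) := by
        funext i
        have h1 := congrFun heq i
        have h2 := congrFun habig i
        have h3 := congrFun hbbig i
        simp only [Pi.add_apply, Pi.smul_apply, smul_eq_mul] at h1 h2 h3 ⊢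
        linear_combination -(p * h2) - q * h3 - h1 +
          emb x i * (p * hst1 + q * hst2 + hpq)
      by_cases hα0 : p * s1 + q * s2 = 0
      · have hps1 : p * s1 = 0 ∧ q * s2 = 0 := by
          constructor <;> nlinarith [mul_nonneg hp.le hs1, mul_nonneg hq.le hs2]
        have hs10 : s1 = 0 := by
          rcases mul_eq_zero.1 hps1.1 with h | h
          · exact absurd h hp.ne'
          · exact h
        have hs20 : s2 = 0 := by
          rcases mul_eq_zero.1 hps1.2 with h | h
          · exact absurd h hq.ne'
          · exact h
        have ht11 : t1 = 1 := by linarith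
        have ht21 : t2 = 1 := by linarith
        rw [hα0] at hEQ
        have key : ∀ i, v1 i = 0 ∧ v2 i = 0 := by
          intro i
          have h := congrFun hEQ i
          simp only [Pi.add_apply, Pi.smul_apply, smul_eq_mul, Pi.zero_apply, zero_smul,
            hs10, hs20, ht11, ht21, zero_mul, mul_zero, mul_one, one_mul, zero_add] at h
          have hsum : p * v1 i + q * v2 i = 0 := by linarith [h]
          constructor
          · nlinarith [hsum, mem_orth.1 hv1 i, mem_orth.1 hv2 i,
              mul_nonneg hq.le (mem_orth.1 hv2 i), hp, hq]
          · nlinarith [hsum, mem_orth.1 hv1 i, mem_orth.1 hv2 i,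
              mul_nonneg hp.le (mem_orth.1 hv1 i), hp, hq]
        have hv10 : v1 = 0 := funext fun i => (key i).1
        have hv20 : v2 = 0 := funext fun i => (key i).2
        · rw [← habig, hs10, ht11, hv10]; funext i; simp
      · exfalso
        have hαnn : 0 ≤ p * s1 + q * s2 :=
          add_nonneg (mul_nonneg hp.le hs1) (mul_nonneg hq.le hs2)
        have hαpos : 0 < p * s1 + q * s2 := lt_of_le_of_ne hαnn (Ne.symm hα0)
        have hc : (p * s1 / (p * s1 + q * s2)) • n1 + (q * s2 / (p * s1 + q * s2)) • n2 ∈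
            newton (X \ {x}) := by
          apply (newton_convex _) hn1 hn2
            (div_nonneg (mul_nonneg hp.le hs1) hαnn)
            (div_nonneg (mul_nonneg hq.le hs2) hαnn)
          field_simp
        have hw : (p * t1) • v1 + (q * t2) • v2 ∈ orth m :=
          orth_add (orth_smul (mul_nonneg hp.le ht1) hv1)
            (orth_smul (mul_nonneg hq.le ht2) hv2)
        have hfin : emb x = ((p * s1 / (p * s1 + q * s2)) • n1 +
            (q * s2 / (p * s1 + q * s2)) • n2) +
            (p * s1 + q * s2)⁻¹ • ((p * t1) • v1 + (q * t2) • v2) := by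
          funext i
          have h := congrFun hEQ i
          simp only [Pi.add_apply, Pi.smul_apply, smul_eq_mul] at h ⊢
          field_simp
          linear_combination h
        exact hv (hfin ▸ newton_add_orth hc (orth_smul (inv_nonneg.2 hαnn) hw))
  · intro hE
    refine ⟨hx, fun hmem => ?_⟩
    have hEx : emb x ∈ Set.extremePoints ℝ (newton (X \ {x})) :=
      ⟨hmem, fun a ha b hb hs =>
        hE.2 (newton_mono Set.diff_subset ha) (newton_mono Set.diff_subset hb) hs⟩
    obtain ⟨y, hy, hye⟩ := extreme_subset_image _ hEx
    exact hy.2 (emb_inj hye)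


lemma vert_subset (X : Set (Fin m → ℕ)) : vert X ⊆ X := fun _ hy => hy.1

lemma vert_empty : vert (∅ : Set (Fin m → ℕ)) = ∅ :=
  Set.subset_empty_iff.1 (vert_subset ∅)

lemma extreme_eq (X : Set (Fin m → ℕ)) :
    Set.extremePoints ℝ (newton X) = emb '' (vert X) := by
  ext z
  constructor
  · intro hz
    obtain ⟨y, hy, rfl⟩ := extreme_subset_image X hz
    exact ⟨y, (vert_iff_extreme hy).2 hz, rfl⟩
  · rintro ⟨y, hy, rfl⟩
    exact (vert_iff_extreme hy.1).1 hy

lemma vert_eq_of_newton_eq {X Y : Set (Fin m → ℕ)} (h : newton X = newton Y) :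
    vert X = vert Y := by
  have h2 : emb '' vert X = emb '' vert Y := by
    rw [← extreme_eq, ← extreme_eq, h]
  exact Set.image_injective.2 emb_inj h2

def mins (X : Set (Fin m → ℕ)) : Set (Fin m → ℕ) := {x ∈ X | ∀ y ∈ X, y ≤ x → y = x}

lemma exists_mins_le {X : Set (Fin m → ℕ)} {x : Fin m → ℕ} (hx : x ∈ X) :
    ∃ y ∈ mins X, y ≤ x := by
  by_cases h : ∀ y ∈ X, y ≤ x → y = x
  · exact ⟨x, ⟨hx, h⟩, le_refl x⟩
  · push_neg at h
    obtain ⟨z, hz, hzx, hne⟩ := h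
    have hlt : (∑ i, z i) < ∑ i, x i := by
      obtain ⟨i, hi⟩ := Function.ne_iff.1 hne
      exact Finset.sum_lt_sum (fun j _ => hzx j)
        ⟨i, Finset.mem_univ i, lt_of_le_of_ne (hzx i) hi⟩
    obtain ⟨y, hy, hyz⟩ := exists_mins_le hz
    exact ⟨y, hy, le_trans hyz hzx⟩
termination_by ∑ i, x i
decreasing_by exact hlt

lemma mins_finite (X : Set (Fin m → ℕ)) : (mins X).Finite := by
  have hac : IsAntichain (· ≤ ·) (mins X) := by
    rintro a ⟨ha, hamin⟩ b ⟨hb, hbmin⟩ hne hab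
    exact hne (hbmin a ha hab)
  exact hac.finite_of_partiallyWellOrderedOn
    (Set.isPWO_of_wellQuasiOrderedLE _)

lemma newton_mins (X : Set (Fin m → ℕ)) : newton (mins X) = newton X := by
  apply Set.Subset.antisymm (newton_mono fun y hy => hy.1)
  rw [newton]
  apply convexHull_min ?_ (newton_convex _)
  rintro _ ⟨w, ⟨y, hy, u, -, rfl⟩, rfl⟩
  obtain ⟨z, hz, hzy⟩ := exists_mins_le hy
  have heq : y + u = z + ((y - z) + u) := by
    funext i
    have hle : z i ≤ y i := hzy i
    simp only [Pi.add_apply, Pi.sub_apply]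
    omega
  exact subset_convexHull ℝ _ ⟨z + ((y - z) + u), ⟨z, hz, (y - z) + u, Set.mem_univ _, rfl⟩,
    congrArg emb heq.symm⟩

lemma newton_diff {X : Set (Fin m → ℕ)} {z : Fin m → ℕ} (h : emb z ∈ newton (X \ {z})) :
    newton X = newton (X \ {z}) := by
  apply Set.Subset.antisymm ?_ (newton_mono Set.diff_subset)
  rw [newton]
  apply convexHull_min ?_ (newton_convex _)
  rintro _ ⟨w, ⟨y, hy, u, -, rfl⟩, rfl⟩
  by_cases hyz : y = z
  · subst hyz
    rw [emb_add]
    exact newton_add_orth h (emb_mem_orth u)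
  · exact subset_convexHull ℝ _ ⟨y + u, ⟨y, ⟨hy, hyz⟩, u, Set.mem_univ u, rfl⟩, rfl⟩

lemma newton_vert_of_finite : ∀ (n : ℕ) (F : Set (Fin m → ℕ)), F.Finite → F.ncard ≤ n →
    newton F = newton (vert F) := by
  intro n
  induction n with
  | zero =>
    intro F hF hcard
    obtain rfl : F = ∅ := (Set.ncard_eq_zero hF).1 (Nat.le_zero.1 hcard)
    rw [vert_empty]
  | succ n ih =>
    intro F hF hcard
    by_cases hv : F ⊆ vert F
    · rw [Set.Subset.antisymm (vert_subset F) hv]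
    · obtain ⟨z, hzF, hznv⟩ := Set.not_subset.1 hv
      have hzn : emb z ∈ newton (F \ {z}) := by
        by_contra hc
        exact hznv ⟨hzF, hc⟩
      have e1 : newton F = newton (F \ {z}) := newton_diff hzn
      have e2 : vert F = vert (F \ {z}) := vert_eq_of_newton_eq e1
      have hlt : (F \ {z}).ncard ≤ n := by
        have := Set.ncard_diff_singleton_lt_of_mem hzF hF
        omega
      rw [e1, ih _ hF.diff hlt, ← e2]

lemma newton_vert (X : Set (Fin m → ℕ)) : newton X = newton (vert X) := by
  have h1 := newton_mins X
  have h2 := newton_vert_of_finite (mins X).ncard (mins X) (mins_finite X) le_rfl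
  have h3 : vert (mins X) = vert X := vert_eq_of_newton_eq h1
  rw [← h1, h2, h3]

lemma vert_sandwich {X Y : Set (Fin m → ℕ)} (h1 : vert X ⊆ Y) (h2 : Y ⊆ X) :
    vert Y = vert X := by
  apply vert_eq_of_newton_eq
  apply Set.Subset.antisymm (newton_mono h2)
  calc newton X = newton (vert X) := newton_vert X
    _ ⊆ newton Y := newton_mono h1


lemma vert_idem (X : Set (Fin m → ℕ)) : vert (vert X) = vert X :=
  vert_sandwich (le_refl _) (vert_subset X)

lemma vert_union_subset (X Y : Set (Fin m → ℕ)) : vert (X ∪ Y) ⊆ vert X ∪ vert Y := by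
  rintro x ⟨hx, hv⟩
  cases hx with
  | inl h => exact Or.inl ⟨h, fun hc =>
      hv (newton_mono (Set.diff_subset_diff_left Set.subset_union_left) hc)⟩
  | inr h => exact Or.inr ⟨h, fun hc =>
      hv (newton_mono (Set.diff_subset_diff_left Set.subset_union_right) hc)⟩

lemma vert_union (X Y : Set (Fin m → ℕ)) : vert (X ∪ Y) = vert (vert X ∪ vert Y) :=
  (vert_sandwich (vert_union_subset X Y)
    (Set.union_subset_union (vert_subset X) (vert_subset Y))).symm

lemma newton_add_singleton (S : Set (Fin m → ℕ)) (y : Fin m → ℕ) :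
    newton S + {emb y} = newton (S + {y}) := by
  have h1 : ({emb y} : Set (Fin m → ℝ)) = convexHull ℝ (emb '' {y}) := by
    rw [Set.image_singleton, convexHull_singleton]
  rw [newton, newton, h1, ← convexHull_add, ← image_emb_add, add_right_comm]

lemma vert_add_mem_left {X Y : Set (Fin m → ℕ)} {x y : Fin m → ℕ} (hx : x ∈ X) (hy : y ∈ Y)
    (hv : x + y ∈ vert (X + Y)) : x ∈ vert X := by
  refine ⟨hx, fun hc => hv.2 ?_⟩
  have h1 : emb (x + y) ∈ newton (X \ {x}) + {emb y} := by
    rw [emb_add]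
    exact ⟨emb x, hc, emb y, rfl, rfl⟩
  rw [newton_add_singleton] at h1
  refine newton_mono ?_ h1
  rintro _ ⟨a, ha, b, hb, rfl⟩
  have hby : b = y := hb
  have hbY : b ∈ Y := by rw [hby]; exact hy
  refine ⟨Set.add_mem_add ha.1 hbY, fun hc2 => ha.2 ?_⟩
  have h3 : a + b = x + y := hc2
  rw [hby] at h3
  exact add_right_cancel h3

lemma vert_add_subset (X Y : Set (Fin m → ℕ)) : vert (X + Y) ⊆ vert X + vert Y := by
  intro z hz
  obtain ⟨x, hx, y, hy, rfl⟩ := hz.1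
  have hv2 : y + x ∈ vert (Y + X) := by rwa [add_comm y x, add_comm Y X]
  exact ⟨x, vert_add_mem_left hx hy hz, y, vert_add_mem_left hy hx hv2, rfl⟩

lemma vert_minkw (X Y : Set (Fin m → ℕ)) : vert (X + Y) = vert (vert X + vert Y) :=
  (vert_sandwich (vert_add_subset X Y)
    (Set.add_subset_add (vert_subset X) (vert_subset Y))).symm

lemma vert_zero : vert ({0} : Set (Fin m → ℕ)) = {0} := by
  apply Set.Subset.antisymm (vert_subset _)
  rintro x hx
  obtain rfl : x = 0 := hx
  refine ⟨rfl, ?_⟩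
  rw [Set.diff_self, newton_empty]
  exact Set.notMem_empty _


lemma fold_union {ι : Type} (X : ι → Set (Fin m → ℕ)) : ∀ l : List ι,
    vert (⋃ i ∈ l, X i) = (l.map fun i => vert (X i)).foldr oplus ∅ := by
  intro l
  induction l with
  | nil =>
    have h : (⋃ i ∈ ([] : List ι), X i) = ∅ := by simp
    rw [List.map_nil, List.foldr_nil, h, vert_empty]
  | cons a l ih =>
    have h : (⋃ i ∈ (a :: l), X i) = X a ∪ ⋃ i ∈ l, X i := by
      ext x
      simp [List.mem_cons, or_and_right, exists_or]
    rw [List.map_cons, List.foldr_cons, h, ← ih]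
    exact vert_union _ _

lemma fold_sum {ι : Type} (X : ι → Set (Fin m → ℕ)) : ∀ l : List ι,
    vert (l.map X).sum = (l.map fun i => vert (X i)).foldr odot {0} := by
  intro l
  induction l with
  | nil =>
    simp only [List.map_nil, List.foldr_nil, List.sum_nil]
    exact vert_zero
  | cons a l ih =>
    rw [List.map_cons, List.sum_cons, List.map_cons, List.foldr_cons, ← ih]
    exact vert_minkw _ _

end NewtonAux

/-- `Vert` turns finite unions into `⊕`-sums and finite (iterated) Minkowski sums
into `⊙`-products; in particular `Vert(nT) = Vert(T)^{⊙n}` for `n ≥ 1`. -/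
theorem vert_homomorphism (m : ℕ) (hm : 1 ≤ m) {ι : Type} (I : Finset ι)
    (X : ι → Set (Fin m → ℕ)) :
    vert (⋃ i ∈ I, X i) = (I.toList.map fun i => vert (X i)).foldr oplus ∅ ∧
    vert (∑ i ∈ I, X i) = (I.toList.map fun i => vert (X i)).foldr odot {0} ∧
    ∀ (T : Set (Fin m → ℕ)) (n : ℕ), 1 ≤ n → vert (nMink n T) = odotPow n (vert T) := by
  refine ⟨?_, ?_, ?_⟩
  · have h := NewtonAux.fold_union X I.toList
    have hs : (⋃ i ∈ I, X i) = ⋃ i ∈ I.toList, X i := by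
      ext x
      simp [Finset.mem_toList]
    rw [hs]
    exact h
  · have h := NewtonAux.fold_sum X I.toList
    have hs : (∑ i ∈ I, X i) = (I.toList.map X).sum := by
      rw [← Multiset.sum_coe, ← Multiset.map_coe, Finset.coe_toList]
      rfl
    rw [hs]
    exact h
  · intro T n
    induction n with
    | zero => intro h; exact absurd h (by omega)
    | succ k ih =>
      intro _
      by_cases hk : k = 0
      · subst hk
        show vert (T + ({0} : Set (Fin m → ℕ))) = odot (vert T) ({0} : Set (Fin m → ℕ))
        rw [NewtonAux.vert_minkw T {0}]
        show vert (vert T + vert ({0} : Set (Fin m → ℕ))) = vert (vert T + {0})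
        rw [NewtonAux.vert_zero]
      · have hk1 : 1 ≤ k := by omega
        show vert (T + nMink k T) = odot (vert T) (odotPow k (vert T))
        rw [← ih hk1]
        exact NewtonAux.vert_minkw _ _


end
end

section
/- Let K be an uncountable algebraically closed field. Let (F_ℓ)_{ℓ∈ℕ} be a sequence of polynomials in the polynomial ring K[x_j : j ∈ ℕ] in countably many variables, and let S ⊆ ℕ. Suppose that for every n ∈ ℕ there exists an assignment a : ℕ → K such that F_ℓ(a) = 0 for all ℓ ≤ n and, for all j ≤ n, a_j = 0 if and only if j ∉ S. Then there exists an assignment a : ℕ → K such that F_ℓ(a) = 0 for all ℓ ∈ ℕ and, for all j ∈ ℕ, a_j = 0 if and only if j ∉ S. -/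
open MvPolynomial

/-- A field that is a quotient of a polynomial ring in countably many variables over an
uncountable field `K` is algebraic over `K`. -/
theorem aux_isAlgebraic (K : Type) [Field K] [Uncountable K]
    {L : Type} [Field L] [Algebra K L] (hrank : Module.rank K L ≤ Cardinal.aleph0) :
    Algebra.IsAlgebraic K L := by
  refine ⟨fun x => ?_⟩
  by_contra hx
  have H : Transcendental K x := hx
  have h1 := H.linearIndependent_sub_inv.cardinal_lift_le_rank
  simp only [Cardinal.lift_id] at h1
  have h2 : (Cardinal.mk K) ≤ Cardinal.aleph0 := h1.trans hrank
  exact absurd h2 (not_le.2 Cardinal.aleph0_lt_mk)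

/-- If a system of countably many polynomial equations in countably many
variables over an uncountable algebraically closed field admits, for every `n`,
an assignment satisfying the first `n` equations and having the prescribed
zero-pattern on the first `n` variables, then it admits an assignment satisfying
all equations and having the prescribed zero-pattern everywhere. -/
theorem finite_approximation
    (K : Type) [Field K] [IsAlgClosed K] [Uncountable K]
    (F : ℕ → MvPolynomial ℕ K) (S : Set ℕ)
    (h : ∀ n : ℕ, ∃ a : ℕ → K,
      (∀ ℓ ≤ n, MvPolynomial.eval a (F ℓ) = 0) ∧ (∀ j ≤ n, a j = 0 ↔ j ∉ S)) :
    ∃ a : ℕ → K,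
      (∀ ℓ : ℕ, MvPolynomial.eval a (F ℓ) = 0) ∧ (∀ j : ℕ, a j = 0 ↔ j ∉ S) := by
  classical
  -- Rabinowitsch trick: generators of the system in variables `ℕ ⊕ ℕ`.
  set R := MvPolynomial (ℕ ⊕ ℕ) K with hR
  set g : ℕ ⊕ ℕ → R := fun i =>
    Sum.elim (fun ℓ => rename Sum.inl (F ℓ))
      (fun j => if j ∈ S then X (Sum.inl j) * X (Sum.inr j) - 1 else X (Sum.inl j)) i with hg
  set I : Ideal R := Ideal.span (Set.range g) with hI
  -- Key: evaluating at an approximate solution kills finitely many generators.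
  have hgval : ∀ n : ℕ, ∃ b : ℕ ⊕ ℕ → K, ∀ i : ℕ ⊕ ℕ, Sum.elim id id i ≤ n →
      eval b (g i) = 0 := by
    intro n
    obtain ⟨a, ha1, ha2⟩ := h n
    refine ⟨Sum.elim a (fun j => (a j)⁻¹), ?_⟩
    rintro (ℓ | j) hi
    · simp only [hg, Sum.elim_inl, eval_rename]
      simpa using ha1 ℓ hi
    · simp only [Sum.elim_inr, id] at hi
      by_cases hjS : j ∈ S
      · have hne : a j ≠ 0 := fun h0 => ((ha2 j hi).1 h0) hjS
        simp [hg, hjS, hne]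
      · have h0 : a j = 0 := (ha2 j hi).2 hjS
        simp [hg, hjS, h0]
  -- `1 ∉ I`.
  have hIne : I ≠ ⊤ := by
    intro htop
    have h1 : (1 : R) ∈ Ideal.span (Set.range g) := by
      rw [← hI, htop]; trivial
    obtain ⟨t, hts, h1t⟩ := Submodule.mem_span_finite_of_mem_span h1
    choose f hf using fun x (hx : x ∈ t) => hts hx
    set n : ℕ := t.attach.sup (fun x => Sum.elim id id (f x.1 x.2)) with hn
    obtain ⟨b, hb⟩ := hgval n
    have hker : Ideal.span (t : Set R) ≤ RingHom.ker (eval b) := by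
      rw [Ideal.span_le]
      intro x hx
      rw [SetLike.mem_coe, RingHom.mem_ker]
      have hx' : x ∈ t := hx
      rw [← hf x hx']
      refine hb _ ?_
      exact Finset.le_sup (f := fun x : {x // x ∈ t} => Sum.elim id id (f x.1 x.2))
        (Finset.mem_attach t ⟨x, hx'⟩)
    have := hker h1t
    rw [RingHom.mem_ker, map_one] at this
    exact one_ne_zero this
  obtain ⟨m, hmmax, hIm⟩ := Ideal.exists_le_maximal I hIne
  letI : Field (R ⧸ m) := Ideal.Quotient.field m
  -- rank of the quotient is countable
  have hrank : Module.rank K (R ⧸ m) ≤ Cardinal.aleph0 := by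
    refine le_trans (rank_quotient_le (Submodule.restrictScalars K m)) ?_
    rw [← (MvPolynomial.basisMonomials (ℕ ⊕ ℕ) K).mk_eq_rank'']
    exact Cardinal.mk_le_aleph0
  haveI halg : Algebra.IsAlgebraic K (R ⧸ m) := aux_isAlgebraic K hrank
  haveI : Algebra.IsIntegral K (R ⧸ m) := halg.isIntegral
  have hsurj : Function.Surjective (algebraMap K (R ⧸ m)) :=
    IsAlgClosed.algebraMap_bijective_of_isIntegral.2
  have hinj : Function.Injective (algebraMap K (R ⧸ m)) := (algebraMap K (R ⧸ m)).injective
  let e : K ≃ₐ[K] (R ⧸ m) := AlgEquiv.ofBijective (Algebra.ofId K (R ⧸ m)) ⟨hinj, hsurj⟩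
  let ψ : R →ₐ[K] K := e.symm.toAlgHom.comp (Ideal.Quotient.mkₐ K m)
  have hψ : ∀ p ∈ I, ψ p = 0 := by
    intro p hp
    have hpm : p ∈ m := hIm hp
    have h0 : Ideal.Quotient.mk m p = 0 := (Ideal.Quotient.eq_zero_iff_mem).2 hpm
    simp [ψ, Ideal.Quotient.mkₐ_eq_mk, h0]
  set a : ℕ → K := fun j => ψ (X (Sum.inl j)) with ha
  have heval : ∀ p : MvPolynomial ℕ K, eval a p = ψ (rename Sum.inl p) := by
    intro p
    have : (eval a : MvPolynomial ℕ K →+* K) =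
        (ψ : R →+* K).comp (rename Sum.inl : MvPolynomial ℕ K →ₐ[K] R) := by
      apply MvPolynomial.ringHom_ext
      · intro c
        simp only [RingHom.coe_comp, Function.comp_apply, AlgHom.coe_toRingHom,
          MvPolynomial.eval_C, AlgHom.coe_comp]
        rw [show ((rename Sum.inl : MvPolynomial ℕ K →ₐ[K] R) (C c)) = C c by simp,
          show (ψ (C c) : K) = c from ?_]
        rw [show (C c : R) = algebraMap K R c from rfl]
        simp [ψ, AlgHom.commutes]
      · intro j
        simp [ha]
    exact congrFun (congrArg (fun f : MvPolynomial ℕ K →+* K => (f : MvPolynomial ℕ K → K)) this) p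
  refine ⟨a, fun ℓ => ?_, fun j => ?_⟩
  · rw [heval]
    exact hψ _ (Ideal.subset_span ⟨Sum.inl ℓ, rfl⟩)
  · have hgen := hψ _ (Ideal.subset_span (Set.mem_range_self (Sum.inr j)) : g (Sum.inr j) ∈ I)
    by_cases hjS : j ∈ S
    · simp only [hg, Sum.elim_inr, if_pos hjS, map_sub, map_mul, map_one] at hgen
      have hmul : a j * ψ (X (Sum.inr j)) = 1 := sub_eq_zero.1 hgen
      constructor
      · intro h0; exact absurd (by rw [h0, zero_mul] at hmul; exact hmul.symm) one_ne_zero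
      · intro hns; exact absurd hjS hns
    · simp only [hg, Sum.elim_inr, if_neg hjS] at hgen
      exact ⟨fun _ => hjS, fun _ => hgen⟩
end
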